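/- arXiv:1512.02730 — 4 statements merged into one kernel-verified Lean document; each statement's English description precedes it below -/
import Mathlib

section
/- Let R and B be two disjoint finite nonempty sets of points in the plane such that R ∪ B is in general position. Then there exists a plane bichromatic tree on R ∪ B, i.e., the geometric complete bipartite graph K(R,B) contains a non-crossing spanning tree. -/
open scoped Classical

noncomputable section

/-- The plane. -/
abbrev Pt : Type := ℝ × ℝ

/-- A set of points is in general position if no three of its points are collinear. -/
def GenPos (P : Set Pt) : Prop :=
  ∀ p ∈ P, ∀ q ∈ P, ∀ r ∈ P, p ≠ q → p ≠ r → q ≠ r →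
    ¬ Collinear ℝ ({p, q, r} : Set Pt)

/-- Degree of a vertex in a simple graph. -/
def deg {V : Type*} (G : SimpleGraph V) (v : V) : ℕ := (G.neighborSet v).ncard

/-- `G` is a plane bichromatic spanning tree on `R ∪ B`: a spanning tree of the
geometric complete bipartite graph `K(R,B)` (every edge joins a point of `R` and a
point of `B`), drawn with straight-line segments, no two of which cross (any point
lying on two distinct closed edges is a common endpoint of both). -/
def PlaneBichromTree (R B : Finset Pt) (G : SimpleGraph {x : Pt // x ∈ R ∪ B}) : Prop :=
  G.IsTree ∧
  (∀ u v : {x : Pt // x ∈ R ∪ B}, G.Adj u v →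
      ((u.1 ∈ R ∧ v.1 ∈ B) ∨ (u.1 ∈ B ∧ v.1 ∈ R))) ∧
  (∀ u v x y : {x : Pt // x ∈ R ∪ B}, G.Adj u v → G.Adj x y →
      s(u, v) ≠ s(x, y) →
      ∀ p : Pt, p ∈ segment ℝ u.1 v.1 → p ∈ segment ℝ x.1 y.1 →
        (p = u.1 ∨ p = v.1) ∧ (p = x.1 ∨ p = y.1))


namespace St8

def f (c : ℝ) (p : Pt) : ℝ := p.1 + c * p.2
def g (c : ℝ) (p : Pt) : ℝ := p.2 - c * p.1
def A (c : ℝ) (p0 q : Pt) : ℝ := f c q - f c p0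
def T (c : ℝ) (p0 q : Pt) : ℝ := (g c q - g c p0) / A c p0 q

lemma exists_c (P : Finset Pt) : ∃ c : ℝ, ∀ p ∈ P, ∀ q ∈ P, p ≠ q → f c p ≠ f c q := by
  classical
  have hfin : (⋃ p ∈ (P : Set Pt), ⋃ q ∈ (P : Set Pt),
      {c : ℝ | p ≠ q ∧ f c p = f c q}).Finite := by
    apply Set.Finite.biUnion P.finite_toSet
    intro p _
    apply Set.Finite.biUnion P.finite_toSet
    intro q _
    apply Set.Subsingleton.finite
    rintro c1 ⟨hne, h1⟩ c2 ⟨-, h2⟩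
    by_contra hcc
    apply hne
    simp only [f] at h1 h2
    have h2' : p.2 = q.2 := by
      have : (c1 - c2) * (p.2 - q.2) = 0 := by linarith
      rcases mul_eq_zero.mp this with h | h
      · exact absurd (by linarith : c1 = c2) hcc
      · linarith
    have h1' : p.1 = q.1 := by rw [h2'] at h1; linarith
    exact Prod.ext h1' h2'
  obtain ⟨c, hcmem⟩ := (hfin.infinite_compl).nonempty
  refine ⟨c, fun p hp q hq hne heq => hcmem ?_⟩
  exact Set.mem_biUnion hp (Set.mem_biUnion hq ⟨hne, heq⟩)

lemma segment_mem {q w p : Pt} (hp : p ∈ segment ℝ q w) :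
    ∃ x y : ℝ, 0 ≤ x ∧ 0 ≤ y ∧ x + y = 1 ∧ p.1 = x * q.1 + y * w.1 ∧ p.2 = x * q.2 + y * w.2 := by
  obtain ⟨x, y, hx, hy, hxy, h⟩ := hp
  refine ⟨x, y, hx, hy, hxy, ?_, ?_⟩
  · rw [← h]; simp [Prod.fst_add]
  · rw [← h]; simp [Prod.snd_add]

lemma pos_combo {a b x y : ℝ} (ha : 0 < a) (hb : 0 < b) (hx : 0 ≤ x) (hy : 0 ≤ y)
    (hxy : x + y = 1) : 0 < x * a + y * b := by
  rcases eq_or_lt_of_le hx with h | h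
  · have : y = 1 := by linarith
    rw [← h, this]; simpa using hb
  · nlinarith

lemma combo_A {c : ℝ} {p0 q w p : Pt} {x y : ℝ} (hxy : x + y = 1)
    (h1 : p.1 = x * q.1 + y * w.1) (h2 : p.2 = x * q.2 + y * w.2) :
    A c p0 p = x * A c p0 q + y * A c p0 w := by
  simp only [A, f]
  rw [h1, h2]
  linear_combination (p0.1 + c * p0.2) * hxy

lemma combo_g {c : ℝ} {p0 q w p : Pt} {x y : ℝ} (hxy : x + y = 1)
    (h1 : p.1 = x * q.1 + y * w.1) (h2 : p.2 = x * q.2 + y * w.2) :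
    g c p - g c p0 = x * (g c q - g c p0) + y * (g c w - g c p0) := by
  simp only [g]
  rw [h1, h2]
  linear_combination (p0.2 - c * p0.1) * hxy

lemma wedge {c : ℝ} {p0 q w p : Pt} (hq : 0 < A c p0 q) (hw : 0 < A c p0 w)
    (hp : p ∈ segment ℝ q w) :
    0 < A c p0 p ∧ min (T c p0 q) (T c p0 w) ≤ T c p0 p
      ∧ T c p0 p ≤ max (T c p0 q) (T c p0 w) := by
  obtain ⟨x, y, hx, hy, hxy, h1, h2⟩ := segment_mem hp
  have hA : A c p0 p = x * A c p0 q + y * A c p0 w := combo_A hxy h1 h2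
  have hG : g c p - g c p0 = x * (g c q - g c p0) + y * (g c w - g c p0) := combo_g hxy h1 h2
  have e1 : T c p0 q * A c p0 q = g c q - g c p0 := div_mul_cancel₀ _ hq.ne'
  have e2 : T c p0 w * A c p0 w = g c w - g c p0 := div_mul_cancel₀ _ hw.ne'
  have hApos : 0 < A c p0 p := hA ▸ pos_combo hq hw hx hy hxy
  have hTp : T c p0 p = (g c p - g c p0) / A c p0 p := rfl
  refine ⟨hApos, ?_, ?_⟩
  · rw [hTp, le_div_iff₀ hApos, hG, hA, ← e1, ← e2]
    have m1 : min (T c p0 q) (T c p0 w) ≤ T c p0 q := min_le_left _ _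
    have m2 : min (T c p0 q) (T c p0 w) ≤ T c p0 w := min_le_right _ _
    nlinarith [mul_nonneg hx (mul_nonneg hq.le (sub_nonneg.2 m1)),
      mul_nonneg hy (mul_nonneg hw.le (sub_nonneg.2 m2))]
  · rw [hTp, div_le_iff₀ hApos, hG, hA, ← e1, ← e2]
    have m1 : T c p0 q ≤ max (T c p0 q) (T c p0 w) := le_max_left _ _
    have m2 : T c p0 w ≤ max (T c p0 q) (T c p0 w) := le_max_right _ _
    nlinarith [mul_nonneg hx (mul_nonneg hq.le (sub_nonneg.2 m1)),
      mul_nonneg hy (mul_nonneg hw.le (sub_nonneg.2 m2))]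

lemma pin {c : ℝ} {p0 q w p : Pt} (hq : 0 < A c p0 q) (hw : 0 < A c p0 w)
    (hne : T c p0 q ≠ T c p0 w) (hp : p ∈ segment ℝ q w) (ht : T c p0 p = T c p0 w) :
    p = w := by
  obtain ⟨x, y, hx, hy, hxy, h1, h2⟩ := segment_mem hp
  have hA : A c p0 p = x * A c p0 q + y * A c p0 w := combo_A hxy h1 h2
  have hG : g c p - g c p0 = x * (g c q - g c p0) + y * (g c w - g c p0) := combo_g hxy h1 h2
  have e1 : T c p0 q * A c p0 q = g c q - g c p0 := div_mul_cancel₀ _ hq.ne'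
  have e2 : T c p0 w * A c p0 w = g c w - g c p0 := div_mul_cancel₀ _ hw.ne'
  have hApos : 0 < A c p0 p := hA ▸ pos_combo hq hw hx hy hxy
  have hgp : g c p - g c p0 = T c p0 w * A c p0 p := by
    rw [← ht]; exact (div_mul_cancel₀ _ hApos.ne').symm
  have h3 : x * (A c p0 q * (T c p0 q - T c p0 w)) = 0 := by
    linear_combination (-1) * hG + hgp + x * e1 + y * e2 + T c p0 w * hA
  have hx0 : x = 0 := by
    rcases mul_eq_zero.mp h3 with h | h
    · exact h
    · exact absurd h (mul_ne_zero hq.ne' (sub_ne_zero.2 hne))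
  have hy1 : y = 1 := by linarith
  rw [hx0, hy1] at h1 h2
  exact Prod.ext (by rw [h1]; ring) (by rw [h2]; ring)

lemma collin {c : ℝ} {p0 q w : Pt} (hq : 0 < A c p0 q) (hw : 0 < A c p0 w)
    (ht : T c p0 q = T c p0 w) : Collinear ℝ ({p0, q, w} : Set Pt) := by
  have e1 : g c q - g c p0 = T c p0 q * A c p0 q := (div_mul_cancel₀ _ hq.ne').symm
  have e2 : g c w - g c p0 = T c p0 q * A c p0 w := by
    rw [ht]; exact (div_mul_cancel₀ _ hw.ne').symm
  have hcc : (1 + c ^ 2) *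
      ((q.2 - p0.2) * (w.1 - p0.1) - (q.1 - p0.1) * (w.2 - p0.2)) = 0 := by
    simp only [g, A, f] at e1 e2
    linear_combination ((w.1 + c * w.2) - (p0.1 + c * p0.2)) * e1
      - ((q.1 + c * q.2) - (p0.1 + c * p0.2)) * e2
  have h1c : (1 : ℝ) + c ^ 2 ≠ 0 := by positivity
  have hD : (q.2 - p0.2) * (w.1 - p0.1) - (q.1 - p0.1) * (w.2 - p0.2) = 0 :=
    (mul_eq_zero.mp hcc).resolve_left h1c
  have hAq : ¬(q.1 - p0.1 = 0 ∧ q.2 - p0.2 = 0) := by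
    simp only [A, f] at hq
    rintro ⟨ha, hb⟩
    have hc2 : c * q.2 - c * p0.2 = 0 := by linear_combination c * hb
    linarith
  rw [collinear_iff_of_mem (Set.mem_insert p0 _)]
  refine ⟨q - p0, ?_⟩
  intro z hz
  have comp : ∀ l : ℝ, (l • (q - p0) + p0 : Pt) = (l * (q.1 - p0.1) + p0.1, l * (q.2 - p0.2) + p0.2) := by
    intro l
    apply Prod.ext <;> simp [Prod.fst_add, Prod.snd_add, Prod.smul_fst, Prod.smul_snd,
      Prod.fst_sub, Prod.snd_sub, smul_eq_mul]
  rcases hz with h | h | h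
  · exact ⟨0, by rw [h, vadd_eq_add, comp]; apply Prod.ext <;> simp⟩
  · refine ⟨1, ?_⟩
    rw [h, vadd_eq_add, comp]
    apply Prod.ext <;> dsimp only <;> ring
  · rw [Set.mem_singleton_iff] at h
    by_cases hq1 : q.1 - p0.1 = 0
    · have hq2 : q.2 - p0.2 ≠ 0 := fun h2 => hAq ⟨hq1, h2⟩
      refine ⟨(w.2 - p0.2) / (q.2 - p0.2), ?_⟩
      rw [h, vadd_eq_add, comp]
      have hw1 : w.1 - p0.1 = 0 := by
        have : (q.2 - p0.2) * (w.1 - p0.1) = 0 := by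
          linear_combination hD + (w.2 - p0.2) * hq1
        exact (mul_eq_zero.mp this).resolve_left hq2
      apply Prod.ext
      · dsimp only
        rw [hq1]; simp; linarith
      · dsimp only
        field_simp
        ring
    · refine ⟨(w.1 - p0.1) / (q.1 - p0.1), ?_⟩
      rw [h, vadd_eq_add, comp]
      apply Prod.ext
      · dsimp only
        field_simp
        ring
      · dsimp only
        have key : (w.1 - p0.1) * (q.2 - p0.2) = (w.2 - p0.2) * (q.1 - p0.1) := by
          linear_combination hD
        field_simp
        linear_combination -key

lemma shared {q q' w p : Pt} (h : ¬ Collinear ℝ ({q, q', w} : Set Pt))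
    (h1 : p ∈ segment ℝ q w) (h2 : p ∈ segment ℝ q' w) : p = w := by
  obtain ⟨x, y, hx, hy, hxy, e1, e2⟩ := segment_mem h1
  obtain ⟨x', y', hx', hy', hxy', e1', e2'⟩ := segment_mem h2
  by_cases hx0 : x = 0
  · have hy1 : y = 1 := by linarith
    rw [hx0, hy1] at e1 e2
    exact Prod.ext (by rw [e1]; ring) (by rw [e2]; ring)
  · exfalso
    apply h
    rw [collinear_iff_of_mem (show w ∈ ({q, q', w} : Set Pt) by simp)]
    refine ⟨q' - w, ?_⟩
    have comp : ∀ l : ℝ, (l • (q' - w) + w : Pt) = (l * (q'.1 - w.1) + w.1, l * (q'.2 - w.2) + w.2) := by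
      intro l
      apply Prod.ext <;> simp [Prod.fst_add, Prod.snd_add, Prod.smul_fst, Prod.smul_snd,
        Prod.fst_sub, Prod.snd_sub, smul_eq_mul]
    intro z hz
    rcases hz with hh | hh | hh
    · refine ⟨x' / x, ?_⟩
      rw [hh, vadd_eq_add, comp]
      have k1 : x * q.1 = x' * (q'.1 - w.1) + x * w.1 := by
        linear_combination e1' - e1 + w.1 * hxy' - w.1 * hxy
      have k2 : x * q.2 = x' * (q'.2 - w.2) + x * w.2 := by
        linear_combination e2' - e2 + w.2 * hxy' - w.2 * hxy
      apply Prod.ext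
      · dsimp only
        field_simp
        linear_combination k1
      · dsimp only
        field_simp
        linear_combination k2
    · refine ⟨1, ?_⟩
      rw [hh, vadd_eq_add, comp]
      apply Prod.ext <;> dsimp only <;> ring
    · rw [Set.mem_singleton_iff] at hh
      refine ⟨0, ?_⟩
      rw [hh, vadd_eq_add, comp]
      apply Prod.ext <;> dsimp only <;> ring

-- segment with one endpoint at the apex p0
lemma through {c : ℝ} {p0 q p : Pt} (hq : 0 < A c p0 q) (hp : p ∈ segment ℝ q p0) :
    p = p0 ∨ (0 < A c p0 p ∧ T c p0 p = T c p0 q) := by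
  obtain ⟨x, y, hx, hy, hxy, h1, h2⟩ := segment_mem hp
  have hA0 : A c p0 p0 = 0 := by simp [A]
  have hA : A c p0 p = x * A c p0 q := by
    have := combo_A (c := c) (p0 := p0) hxy h1 h2
    rw [hA0] at this; linarith
  rcases eq_or_lt_of_le hx with h0 | h0
  · left
    have hy1 : y = 1 := by linarith
    rw [← h0, hy1] at h1 h2
    exact Prod.ext (by rw [h1]; ring) (by rw [h2]; ring)
  · right
    have hApos : 0 < A c p0 p := by rw [hA]; positivity
    refine ⟨hApos, ?_⟩
    have hG : g c p - g c p0 = x * (g c q - g c p0) := by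
      simp only [g]; rw [h1, h2]; linear_combination (p0.2 - c * p0.1) * hxy
    show (g c p - g c p0) / A c p0 p = _
    rw [hG, hA, mul_div_mul_left _ _ (ne_of_gt h0)]
    rfl

open SimpleGraph in

lemma acyclic_of_parent {V : Type*} {G : SimpleGraph V} (par : V → V) (ht : V → ℕ)
    (H : ∀ a b, G.Adj a b → (par a = b ∧ ht b < ht a) ∨ (par b = a ∧ ht a < ht b)) :
    G.IsAcyclic := by
  classical
  intro v c hc
  -- pick a vertex of maximal height on the cycle
  obtain ⟨u, hu, hmax⟩ := Finset.exists_max_image c.support.toFinset ht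
    ⟨v, by simp [Walk.start_mem_support]⟩
  rw [List.mem_toFinset] at hu
  have hmax' : ∀ w ∈ c.support, ht w ≤ ht u := fun w hw => hmax w (by simpa using hw)
  set c' := c.rotate u hu with hc'def
  have hc' : c'.IsCycle := hc.rotate hu
  have hsupp : ∀ w ∈ c'.support, ht w ≤ ht u := by
    intro w hw
    rw [Walk.support_eq_cons, List.mem_cons] at hw
    rcases hw with rfl | hw
    · exact le_rfl
    · have hrot := Walk.support_rotate c u hu
      have : w ∈ c.support.tail := (hrot.mem_iff).mp hw
      exact hmax' w (List.mem_of_mem_tail this)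
  have hlen : 3 ≤ c'.length := hc'.three_le_length
  have hnotnil : ¬ c'.Nil := hc'.not_nil
  obtain ⟨x, hadjux, q, hq⟩ := Walk.not_nil_iff.mp hnotnil
  have hrevnotnil : ¬ c'.reverse.Nil := by
    rw [Walk.not_nil_iff_lt_length, Walk.length_reverse]; omega
  obtain ⟨y, hadjuy, q2, hq2⟩ := Walk.not_nil_iff.mp hrevnotnil
  -- x and y are on the support
  have hxs : x ∈ c'.support := by
    rw [hq]; simp [Walk.support_cons, Walk.start_mem_support]
  have hys : y ∈ c'.support := by
    have : y ∈ c'.reverse.support := by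
      rw [hq2]; simp [Walk.support_cons, Walk.start_mem_support]
    rwa [Walk.support_reverse, List.mem_reverse] at this
  -- parent identification
  have hpux : par u = x := by
    rcases H u x hadjux with ⟨h1, _⟩ | ⟨_, h2⟩
    · exact h1
    · exact absurd h2 (not_lt.mpr (hsupp x hxs))
  have hpuy : par u = y := by
    rcases H u y hadjuy with ⟨h1, _⟩ | ⟨_, h2⟩
    · exact h1
    · exact absurd h2 (not_lt.mpr (hsupp y hys))
  have hxy : x = y := hpux ▸ hpuy
  -- edges duplication
  have hE : c'.reverse.edges = c'.edges.reverse := Walk.edges_reverse c'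
  rw [hq2, hq] at hE
  simp only [Walk.edges_cons, List.reverse_cons] at hE
  -- q.edges nonempty
  have hqlen : q.edges ≠ [] := by
    have h1 : q.length = c'.length - 1 := by rw [hq]; simp
    have : q.edges.length = q.length := Walk.length_edges q
    intro hnil
    rw [hnil] at this
    simp at this
    omega
  obtain ⟨e0, t0, het⟩ := List.exists_cons_of_ne_nil (by
    intro hnil
    apply hqlen
    rwa [List.reverse_eq_nil_iff] at hnil : q.edges.reverse ≠ [])
  rw [het] at hE
  have hheads : s(u, y) = e0 := by
    have := congrArg List.head? hE
    simpa using this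
  have he0mem : e0 ∈ q.edges := by
    have : e0 ∈ q.edges.reverse := by rw [het]; simp
    rwa [List.mem_reverse] at this
  have hnodup : (Walk.cons hadjux q).edges.Nodup := by
    rw [← hq]; exact hc'.edges_nodup
  rw [Walk.edges_cons, List.nodup_cons] at hnodup
  apply hnodup.1
  have : s(u, x) = e0 := by rw [hxy]; exact hheads
  rw [this]
  exact he0mem

end St8

/-- For disjoint finite nonempty point sets `R`, `B` with `R ∪ B`
in general position, there exists a plane bichromatic tree on `R ∪ B`. -/
theorem statement_8 (R B : Finset Pt) (hdisj : Disjoint R B)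
    (hR : R.Nonempty) (hB : B.Nonempty) (hgp : GenPos (↑(R ∪ B) : Set Pt)) :
    ∃ G : SimpleGraph {x : Pt // x ∈ R ∪ B}, PlaneBichromTree R B G := by
  classical
  obtain ⟨c, hc⟩ := St8.exists_c (R ∪ B)
  have hRBne : (R ∪ B).Nonempty := ⟨hR.choose, Finset.mem_union_left _ hR.choose_spec⟩
  obtain ⟨p0, hp0RB, hp0min⟩ := Finset.exists_min_image (R ∪ B) (St8.f c) hRBne
  -- the opposite-color set
  set O : Finset Pt := if p0 ∈ R then B else R with hOdef
  have hOne : O.Nonempty := by rw [hOdef]; split <;> [exact hB; exact hR]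
  have hOsub : O ⊆ R ∪ B := by
    rw [hOdef]; split
    · exact Finset.subset_union_right
    · exact Finset.subset_union_left
  have hp0O : p0 ∉ O := by
    rw [hOdef]
    split
    · next h => exact fun hb => (Finset.disjoint_left.mp hdisj h hb)
    · next h => exact h
  have hcol : ∀ x y : Pt, x ∈ R ∪ B → y ∈ R ∪ B → x ∈ O → y ∉ O →
      (x ∈ R ∧ y ∈ B) ∨ (x ∈ B ∧ y ∈ R) := by
    intro x y hx hy hxO hyO
    by_cases hp : p0 ∈ R
    · rw [hOdef, if_pos hp] at hxO hyO
      have hyR : y ∈ R := (Finset.mem_union.mp hy).resolve_right hyO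
      exact Or.inr ⟨hxO, hyR⟩
    · rw [hOdef, if_neg hp] at hxO hyO
      have hyB : y ∈ B := (Finset.mem_union.mp hy).resolve_left hyO
      exact Or.inl ⟨hxO, hyB⟩
  -- positivity and injectivity
  have hApos : ∀ q ∈ R ∪ B, q ≠ p0 → 0 < St8.A c p0 q := by
    intro q hq hne
    have h1 := hp0min q hq
    have h2 := hc p0 hp0RB q hq (Ne.symm hne)
    simp only [St8.A]
    have := lt_of_le_of_ne h1 h2
    linarith
  have hTinj : ∀ q ∈ R ∪ B, ∀ w ∈ R ∪ B, q ≠ p0 → w ≠ p0 → q ≠ w →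
      St8.T c p0 q ≠ St8.T c p0 w := by
    intro q hq w hw hq0 hw0 hqw heq
    have hcoll := St8.collin (hApos q hq hq0) (hApos w hw hw0) heq
    exact hgp p0 (Finset.mem_coe.mpr hp0RB) q (Finset.mem_coe.mpr hq) w (Finset.mem_coe.mpr hw)
      (Ne.symm hq0) (Ne.symm hw0) hqw hcoll
  -- the attachment function
  have hpa : ∀ v : Pt, ∃ b : Pt, b ∈ O ∧
      ((∃ b' ∈ O, St8.T c p0 b' < St8.T c p0 v) →
        (St8.T c p0 b < St8.T c p0 v ∧
          ∀ b' ∈ O, St8.T c p0 b' < St8.T c p0 v → St8.T c p0 b' ≤ St8.T c p0 b)) ∧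
      ((¬ ∃ b' ∈ O, St8.T c p0 b' < St8.T c p0 v) →
        ∀ b' ∈ O, St8.T c p0 b ≤ St8.T c p0 b') := by
    intro v
    by_cases hex : ∃ b' ∈ O, St8.T c p0 b' < St8.T c p0 v
    · obtain ⟨b0, hb0O, hb0⟩ := hex
      have hFne : (O.filter (fun b => St8.T c p0 b < St8.T c p0 v)).Nonempty :=
        ⟨b0, Finset.mem_filter.mpr ⟨hb0O, hb0⟩⟩
      obtain ⟨b, hbF, hbmax⟩ := Finset.exists_max_image _ (St8.T c p0) hFne
      have hbO := (Finset.mem_filter.mp hbF).1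
      have hblt := (Finset.mem_filter.mp hbF).2
      refine ⟨b, hbO, fun _ => ⟨hblt, ?_⟩, fun h => absurd ⟨b0, hb0O, hb0⟩ h⟩
      intro b' hb' hlt
      exact hbmax b' (Finset.mem_filter.mpr ⟨hb', hlt⟩)
    · obtain ⟨b, hb, hbmin⟩ := Finset.exists_min_image O (St8.T c p0) hOne
      exact ⟨b, hb, fun h => absurd h hex, fun _ => hbmin⟩
  choose pa hpaO hpaMax hpaMin using hpa
  -- vertices
  let v0 : {x : Pt // x ∈ R ∪ B} := ⟨p0, hp0RB⟩
  -- parent function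
  obtain ⟨par, hpar1, hpar0, hpar2⟩ :
      ∃ par : {x : Pt // x ∈ R ∪ B} → {x : Pt // x ∈ R ∪ B},
        (∀ v, v.1 ∈ O → par v = v0) ∧ par v0 = v0 ∧
        (∀ v, v.1 ∉ O → v ≠ v0 → (par v).1 = pa v.1) := by
    refine ⟨fun v => if h : v.1 ∈ O ∨ v = v0 then v0 else ⟨pa v.1, hOsub (hpaO v.1)⟩, ?_, ?_, ?_⟩
    · intro v hv
      show (if h : v.1 ∈ O ∨ v = v0 then v0 else (⟨pa v.1, hOsub (hpaO v.1)⟩ : {x : Pt // x ∈ R ∪ B})) = v0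
      rw [dif_pos (Or.inl hv)]
    · show (if h : v0.1 ∈ O ∨ v0 = v0 then v0 else (⟨pa v0.1, hOsub (hpaO v0.1)⟩ : {x : Pt // x ∈ R ∪ B})) = v0
      rw [dif_pos (Or.inr rfl)]
    · intro v h1 h2
      show ((if h : v.1 ∈ O ∨ v = v0 then v0 else (⟨pa v.1, hOsub (hpaO v.1)⟩ : {x : Pt // x ∈ R ∪ B})) : {x : Pt // x ∈ R ∪ B}).1 = pa v.1
      rw [dif_neg (not_or.mpr ⟨h1, h2⟩)]
  -- basic facts
  have hv0O : v0.1 ∉ O := hp0O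
  have hparO : ∀ v, v.1 ∉ O → v ≠ v0 → (par v).1 ∈ O := by
    intro v h1 h2; rw [hpar2 v h1 h2]; exact hpaO v.1
  have hparne0 : ∀ v, v.1 ∉ O → v ≠ v0 → par v ≠ v0 := by
    intro v h1 h2 he
    exact hp0O (by rw [← show (par v).1 = p0 from congrArg Subtype.val he]; exact hparO v h1 h2)
  have hsne : ∀ a b : {x : Pt // x ∈ R ∪ B}, a.1 ≠ b.1 → a ≠ b :=
    fun a b h he => h (congrArg Subtype.val he)
  have hnev0 : ∀ v : {x : Pt // x ∈ R ∪ B}, v ≠ v0 → v.1 ≠ p0 :=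
    fun v h he => h (Subtype.ext he)
  have hane : ∀ v : {x : Pt // x ∈ R ∪ B}, v ≠ v0 → 0 < St8.A c p0 v.1 :=
    fun v h => hApos v.1 v.2 (hnev0 v h)
  have htinj' : ∀ v w : {x : Pt // x ∈ R ∪ B}, v ≠ v0 → w ≠ v0 → v ≠ w →
      St8.T c p0 v.1 ≠ St8.T c p0 w.1 := by
    intro v w h1 h2 h3
    exact hTinj v.1 v.2 w.1 w.2 (hnev0 v h1) (hnev0 w h2) (fun he => h3 (Subtype.ext he))
  have hTeq : ∀ v w : {x : Pt // x ∈ R ∪ B}, v ≠ v0 → w ≠ v0 →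
      St8.T c p0 v.1 = St8.T c p0 w.1 → v = w := by
    intro v w h1 h2 he
    by_contra h3
    exact htinj' v w h1 h2 h3 he
  have hncol : ∀ a b d : {x : Pt // x ∈ R ∪ B}, a ≠ b → a ≠ d → b ≠ d →
      ¬ Collinear ℝ ({a.1, b.1, d.1} : Set Pt) := by
    intro a b d h1 h2 h3
    exact hgp a.1 (Finset.mem_coe.mpr a.2) b.1 (Finset.mem_coe.mpr b.2) d.1 (Finset.mem_coe.mpr d.2)
      (fun he => h1 (Subtype.ext he)) (fun he => h2 (Subtype.ext he))
      (fun he => h3 (Subtype.ext he))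
  -- the graph
  set G : SimpleGraph {x : Pt // x ∈ R ∪ B} :=
    SimpleGraph.fromRel (fun a b => a ≠ v0 ∧ par a = b) with hGdef
  have hadj : ∀ a b, G.Adj a b ↔ a ≠ b ∧ ((a ≠ v0 ∧ par a = b) ∨ (b ≠ v0 ∧ par b = a)) := by
    intro a b
    rw [hGdef]
    exact SimpleGraph.fromRel_adj _ a b
  have hparnev : ∀ v, v ≠ v0 → par v ≠ v := by
    intro v h
    by_cases hO : v.1 ∈ O
    · rw [hpar1 v hO]; exact Ne.symm h
    · intro he
      exact hO (by rw [← congrArg Subtype.val he]; exact hparO v hO h)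
  have hadjpar : ∀ v, v ≠ v0 → G.Adj v (par v) := by
    intro v h
    rw [hadj]
    exact ⟨Ne.symm (hparnev v h), Or.inl ⟨h, rfl⟩⟩
  -- IsTree
  have hacyc : G.IsAcyclic := by
    apply St8.acyclic_of_parent par
      (fun v => if v = v0 then 0 else if v.1 ∈ O then 1 else 2)
    intro a b hab
    have hht : ∀ v, v ≠ v0 →
        (if (par v) = v0 then 0 else if (par v).1 ∈ O then 1 else 2) <
          (if v = v0 then 0 else if v.1 ∈ O then (1:ℕ) else 2) := by
      intro v h
      rw [if_neg h]
      by_cases hO : v.1 ∈ O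
      · rw [if_pos hO, hpar1 v hO, if_pos rfl]; norm_num
      · rw [if_neg hO, if_neg (hparne0 v hO h), if_pos (hparO v hO h)]; norm_num
    rw [hadj] at hab
    rcases hab.2 with ⟨h1, h2⟩ | ⟨h1, h2⟩
    · left; exact ⟨h2, by rw [← h2]; exact hht a h1⟩
    · right; exact ⟨h2, by rw [← h2]; exact hht b h1⟩
  have hconn : G.Connected := by
    have hreach : ∀ v, G.Reachable v v0 := by
      intro v
      by_cases h0 : v = v0
      · rw [h0]
      · by_cases hO : v.1 ∈ O
        · exact (by rw [← hpar1 v hO]; exact hadjpar v h0 : G.Adj v v0).reachable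
        · refine (hadjpar v h0).reachable.trans ?_
          exact (by rw [← hpar1 (par v) (hparO v hO h0)]
                    exact hadjpar (par v) (hparne0 v hO h0) : G.Adj (par v) v0).reachable
    have : Nonempty {x : Pt // x ∈ R ∪ B} := ⟨v0⟩
    exact SimpleGraph.Connected.mk (fun u v => (hreach u).trans (hreach v).symm)
  -- color condition, normal form
  have hnorm : ∀ u v, G.Adj u v → ∃ w, w ≠ v0 ∧ ((u = w ∧ v = par w) ∨ (u = par w ∧ v = w)) := by
    intro u v huv
    rw [hadj] at huv
    rcases huv.2 with ⟨h1, h2⟩ | ⟨h1, h2⟩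
    · exact ⟨u, h1, Or.inl ⟨rfl, h2.symm⟩⟩
    · exact ⟨v, h1, Or.inr ⟨h2.symm, rfl⟩⟩
  have hedgecol : ∀ w, w ≠ v0 → ((w.1 ∈ O ∧ (par w).1 ∉ O) ∨ (w.1 ∉ O ∧ (par w).1 ∈ O)) := by
    intro w h
    by_cases hO : w.1 ∈ O
    · left; exact ⟨hO, by rw [hpar1 w hO]; exact hp0O⟩
    · right; exact ⟨hO, hparO w hO h⟩
  have h2 : ∀ u v, G.Adj u v → ((u.1 ∈ R ∧ v.1 ∈ B) ∨ (u.1 ∈ B ∧ v.1 ∈ R)) := by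
    intro u v huv
    obtain ⟨w, hw, hcase⟩ := hnorm u v huv
    have hcc := hedgecol w hw
    rcases hcase with ⟨hu, hv⟩ | ⟨hu, hv⟩ <;> rw [hu, hv] <;> rcases hcc with ⟨ha, hb⟩ | ⟨ha, hb⟩
    · have := hcol w.1 (par w).1 w.2 (par w).2 ha hb; tauto
    · have := hcol (par w).1 w.1 (par w).2 w.2 hb ha; tauto
    · have := hcol w.1 (par w).1 w.2 (par w).2 ha hb; tauto
    · have := hcol (par w).1 w.1 (par w).2 w.2 hb ha; tauto
  -- crossing: star edge vs non-star edge
  have HcaseSt : ∀ u x : {x : Pt // x ∈ R ∪ B}, u ≠ v0 → x ≠ v0 → u.1 ∈ O → x.1 ∉ O →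
      ∀ p : Pt, p ∈ segment ℝ u.1 (par u).1 → p ∈ segment ℝ x.1 (par x).1 →
      (p = u.1 ∨ p = (par u).1) ∧ (p = x.1 ∨ p = (par x).1) := by
    intro u x hu0 hx0 huO hxO p hp1 hp2
    have hparu : (par u).1 = p0 := by rw [hpar1 u huO]
    have hbO : (par x).1 ∈ O := hparO x hxO hx0
    have hbne0 : par x ≠ v0 := hparne0 x hxO hx0
    have hxb : x ≠ par x := Ne.symm (hparnev x hx0)
    rw [hparu] at hp1
    rcases St8.through (hane u hu0) hp1 with hpp0 | ⟨hApp, hTp⟩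
    · exfalso
      obtain ⟨hApos2, -, -⟩ := St8.wedge (hane x hx0) (hane (par x) hbne0) hp2
      rw [hpp0] at hApos2
      simp [St8.A] at hApos2
    · obtain ⟨-, hlow, hhigh⟩ := St8.wedge (hane x hx0) (hane (par x) hbne0) hp2
      have hTxb : St8.T c p0 x.1 ≠ St8.T c p0 (par x).1 := htinj' x (par x) hx0 hbne0 hxb
      have hub : u = par x := by
        have hbpa : (par x).1 = pa x.1 := hpar2 x hxO hx0
        by_cases hex : ∃ b' ∈ O, St8.T c p0 b' < St8.T c p0 x.1
        · obtain ⟨hlt, hmax⟩ := hpaMax x.1 hex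
          rw [← hbpa] at hlt hmax
          rw [min_eq_right hlt.le] at hlow
          rw [max_eq_left hlt.le] at hhigh
          rw [hTp] at hlow hhigh
          rcases lt_trichotomy (St8.T c p0 u.1) (St8.T c p0 x.1) with h | h | h
          · exact hTeq u (par x) hu0 hbne0 (le_antisymm (hmax u.1 huO h) hlow)
          · exact absurd (hTeq u x hu0 hx0 h)
              (by intro he; rw [he] at huO; exact hxO huO)
          · exact absurd hhigh (not_le.mpr h)
        · have hmin := hpaMin x.1 hex
          rw [← hbpa] at hmin
          push_neg at hex
          have hxlb : St8.T c p0 x.1 < St8.T c p0 (par x).1 :=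
            lt_of_le_of_ne (hex _ hbO) hTxb
          rw [min_eq_left hxlb.le] at hlow
          rw [max_eq_right hxlb.le] at hhigh
          rw [hTp] at hlow hhigh
          exact hTeq u (par x) hu0 hbne0 (le_antisymm hhigh (hmin u.1 huO))
      have hpb : p = (par x).1 :=
        St8.pin (hane x hx0) (hane (par x) hbne0) hTxb hp2 (by rw [hTp, hub])
      exact ⟨Or.inl (by rw [hpb, ← hub]), Or.inr hpb⟩
  -- crossing: non-star vs non-star
  have HcaseRR : ∀ u x : {x : Pt // x ∈ R ∪ B}, u ≠ v0 → x ≠ v0 → u.1 ∉ O → x.1 ∉ O →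
      St8.T c p0 u.1 < St8.T c p0 x.1 →
      ∀ p : Pt, p ∈ segment ℝ u.1 (par u).1 → p ∈ segment ℝ x.1 (par x).1 →
      (p = u.1 ∨ p = (par u).1) ∧ (p = x.1 ∨ p = (par x).1) := by
    intro u x hu0 hx0 huO hxO hT p hp1 hp2
    have hb1O : (par u).1 ∈ O := hparO u huO hu0
    have hb2O : (par x).1 ∈ O := hparO x hxO hx0
    have hb1ne0 : par u ≠ v0 := hparne0 u huO hu0
    have hb2ne0 : par x ≠ v0 := hparne0 x hxO hx0
    have hb1pa : (par u).1 = pa u.1 := hpar2 u huO hu0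
    have hb2pa : (par x).1 = pa x.1 := hpar2 x hxO hx0
    have hux : u ≠ x := fun he =>
      absurd (congrArg (fun z : {x : Pt // x ∈ R ∪ B} => St8.T c p0 z.1) he) (ne_of_lt hT)
    have hsameb : par u = par x →
        (p = u.1 ∨ p = (par u).1) ∧ (p = x.1 ∨ p = (par x).1) := by
      intro he
      have hub : u ≠ par u := Ne.symm (hparnev u hu0)
      have hxb : x ≠ par u := by rw [he]; exact Ne.symm (hparnev x hx0)
      have hncl : ¬ Collinear ℝ ({u.1, x.1, (par u).1} : Set Pt) :=
        hncol u x (par u) hux hub hxb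
      rw [← he] at hp2
      have hpb : p = (par u).1 := St8.shared hncl hp1 hp2
      exact ⟨Or.inr hpb, Or.inr (by rw [← he]; exact hpb)⟩
    obtain ⟨-, hlow1, hhigh1⟩ := St8.wedge (hane u hu0) (hane (par u) hb1ne0) hp1
    obtain ⟨-, hlow2, hhigh2⟩ := St8.wedge (hane x hx0) (hane (par x) hb2ne0) hp2
    by_cases hexu : ∃ b' ∈ O, St8.T c p0 b' < St8.T c p0 u.1
    · have hexx : ∃ b' ∈ O, St8.T c p0 b' < St8.T c p0 x.1 := by
        obtain ⟨b', hb', hlt⟩ := hexu; exact ⟨b', hb', hlt.trans hT⟩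
      obtain ⟨hlt1, hmax1⟩ := hpaMax u.1 hexu
      obtain ⟨hlt2, hmax2⟩ := hpaMax x.1 hexx
      rw [← hb1pa] at hlt1 hmax1
      rw [← hb2pa] at hlt2 hmax2
      rcases lt_trichotomy (St8.T c p0 (par x).1) (St8.T c p0 u.1) with h | h | h
      · have ha := hmax1 (par x).1 hb2O h
        have hb := hmax2 (par u).1 hb1O (hlt1.trans hT)
        exact hsameb (hTeq (par u) (par x) hb1ne0 hb2ne0 (le_antisymm hb ha))
      · exact absurd (hTeq (par x) u hb2ne0 hu0 h)
          (by intro he; rw [← he] at huO; exact huO hb2O)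
      · exfalso
        rw [max_eq_left hlt1.le] at hhigh1
        rw [min_eq_right hlt2.le] at hlow2
        linarith
    · have hminu := hpaMin u.1 hexu
      rw [← hb1pa] at hminu
      push_neg at hexu
      have hub1 : St8.T c p0 u.1 < St8.T c p0 (par u).1 :=
        lt_of_le_of_ne (hexu _ hb1O)
          (htinj' u (par u) hu0 hb1ne0 (Ne.symm (hparnev u hu0)))
      by_cases hexx : ∃ b' ∈ O, St8.T c p0 b' < St8.T c p0 x.1
      · obtain ⟨hlt2, hmax2⟩ := hpaMax x.1 hexx
        rw [← hb2pa] at hlt2 hmax2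
        have h12 : St8.T c p0 (par u).1 ≤ St8.T c p0 (par x).1 := hminu (par x).1 hb2O
        rcases eq_or_lt_of_le h12 with h | h
        · exact hsameb (hTeq (par u) (par x) hb1ne0 hb2ne0 h)
        · exfalso
          rw [max_eq_right hub1.le] at hhigh1
          rw [min_eq_right hlt2.le] at hlow2
          linarith
      · have hminx := hpaMin x.1 hexx
        rw [← hb2pa] at hminx
        exact hsameb (hTeq (par u) (par x) hb1ne0 hb2ne0
          (le_antisymm (hminu (par x).1 hb2O) (hminx (par u).1 hb1O)))
  -- crossing: general canonical form
  have Hcross : ∀ u x : {x : Pt // x ∈ R ∪ B}, u ≠ v0 → x ≠ v0 →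
      s(u, par u) ≠ s(x, par x) →
      ∀ p : Pt, p ∈ segment ℝ u.1 (par u).1 → p ∈ segment ℝ x.1 (par x).1 →
      (p = u.1 ∨ p = (par u).1) ∧ (p = x.1 ∨ p = (par x).1) := by
    intro u x hu0 hx0 hne p hp1 hp2
    by_cases huO : u.1 ∈ O <;> by_cases hxO : x.1 ∈ O
    · have hune : u ≠ x := by intro he; apply hne; rw [he]
      have hparu : (par u).1 = p0 := by rw [hpar1 u huO]
      have hparx : (par x).1 = p0 := by rw [hpar1 x hxO]
      rw [hparu] at hp1
      rw [hparx] at hp2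
      rcases St8.through (hane u hu0) hp1 with h1 | ⟨hA1, hT1⟩
      · exact ⟨Or.inr (by rw [hparu]; exact h1), Or.inr (by rw [hparx]; exact h1)⟩
      rcases St8.through (hane x hx0) hp2 with h2 | ⟨hA2, hT2⟩
      · exact ⟨Or.inr (by rw [hparu]; exact h2), Or.inr (by rw [hparx]; exact h2)⟩
      exact absurd (hTeq u x hu0 hx0 (hT1.symm.trans hT2)) hune
    · exact HcaseSt u x hu0 hx0 huO hxO p hp1 hp2
    · exact (HcaseSt x u hx0 hu0 hxO huO p hp2 hp1).symm
    · rcases lt_trichotomy (St8.T c p0 u.1) (St8.T c p0 x.1) with h | h | h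
      · exact HcaseRR u x hu0 hx0 huO hxO h p hp1 hp2
      · exfalso
        apply hne
        rw [hTeq u x hu0 hx0 h]
      · exact (HcaseRR x u hx0 hu0 hxO huO h p hp2 hp1).symm
  -- final crossing condition
  have h3 : ∀ u v x y : {x : Pt // x ∈ R ∪ B}, G.Adj u v → G.Adj x y →
      s(u, v) ≠ s(x, y) →
      ∀ p : Pt, p ∈ segment ℝ u.1 v.1 → p ∈ segment ℝ x.1 y.1 →
      (p = u.1 ∨ p = v.1) ∧ (p = x.1 ∨ p = y.1) := by
    intro u v x y huv hxy hne p hp1 hp2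
    obtain ⟨w1, hw1, hc1⟩ := hnorm u v huv
    obtain ⟨w2, hw2, hc2⟩ := hnorm x y hxy
    have e1 : s(u, v) = s(w1, par w1) ∧ segment ℝ u.1 v.1 = segment ℝ w1.1 (par w1).1 ∧
        ((p = w1.1 ∨ p = (par w1).1) → (p = u.1 ∨ p = v.1)) := by
      rcases hc1 with ⟨hu, hv⟩ | ⟨hu, hv⟩
      · rw [hu, hv]; exact ⟨rfl, rfl, id⟩
      · rw [hu, hv]; exact ⟨Sym2.eq_swap, segment_symm ℝ _ _, Or.symm⟩
    have e2 : s(x, y) = s(w2, par w2) ∧ segment ℝ x.1 y.1 = segment ℝ w2.1 (par w2).1 ∧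
        ((p = w2.1 ∨ p = (par w2).1) → (p = x.1 ∨ p = y.1)) := by
      rcases hc2 with ⟨hu, hv⟩ | ⟨hu, hv⟩
      · rw [hu, hv]; exact ⟨rfl, rfl, id⟩
      · rw [hu, hv]; exact ⟨Sym2.eq_swap, segment_symm ℝ _ _, Or.symm⟩
    have hres := Hcross w1 w2 hw1 hw2 (by rw [← e1.1, ← e2.1]; exact hne) p
      (e1.2.1 ▸ hp1) (e2.2.1 ▸ hp2)
    exact ⟨e1.2.2 hres.1, e2.2.2 hres.2⟩
  exact ⟨G, ⟨hconn, hacyc⟩, h2, h3⟩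
end
end

section
/- Let R and B be two disjoint finite sets and k ≥ 1 an integer such that 1 ≤ |B| ≤ |R| ≤ k|B| + 1. Then the complete bipartite graph with parts R and B has a spanning tree whose maximum vertex degree is at most k + 1. -/
open scoped Classical

noncomputable section

lemma tree_of_parent {V : Type*} [Fintype V] (p : V → V) (root : V)
    (hroot : p root = root) (h : V → ℕ) (hh : ∀ v, v ≠ root → h (p v) < h v) :
    (SimpleGraph.fromRel (fun u v => p u = v)).IsTree := by
  set G := SimpleGraph.fromRel (fun u v => p u = v) with hG
  have hple : ∀ v, h (p v) ≤ h v := by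
    intro v
    by_cases hv : v = root
    · subst hv; rw [hroot]
    · exact (hh v hv).le
  have hiter : ∀ t v, h (p^[t] v) ≤ h v := by
    intro t
    induction t with
    | zero => simp
    | succ s ih => intro v; rw [Function.iterate_succ_apply]
                   exact le_trans (ih (p v)) (hple v)
  have hadj : ∀ u v, G.Adj u v ↔ u ≠ v ∧ (p u = v ∨ p v = u) := by
    intro u v; rw [hG, SimpleGraph.fromRel_adj]
  -- connectivity
  have hreachN : ∀ N v, h v ≤ N → G.Reachable v root := by
    intro N
    induction N with
    | zero =>
      intro v hv
      by_cases hvr : v = root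
      · subst hvr; exact SimpleGraph.Reachable.refl _
      · exact absurd (hh v hvr) (by omega)
    | succ N ih =>
      intro v hv
      by_cases hvr : v = root
      · subst hvr; exact SimpleGraph.Reachable.refl _
      · have h1 : G.Adj v (p v) := by
          rw [hadj]
          refine ⟨fun hc => ?_, Or.inl rfl⟩
          · have := hh v hvr; rw [← hc] at this; omega
        exact (h1.reachable).trans (ih (p v) (by have := hh v hvr; omega))
  have hreach : ∀ v, G.Reachable v root := fun v => hreachN (h v) v le_rfl
  have hconn : G.Connected := by
    rw [SimpleGraph.connected_iff]
    exact ⟨fun u v => (hreach u).trans (hreach v).symm, ⟨root⟩⟩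
  refine ⟨hconn, ?_⟩
  rw [SimpleGraph.isAcyclic_iff_forall_adj_isBridge]
  -- key claim: no walk from u to p u avoids the edge s(u, p u)
  have key : ∀ u v : V, p u = v → u ≠ v → ∀ q : G.Walk u v, s(u, v) ∈ q.edges := by
    intro v pv hpv hne q
    subst hpv
    have hvroot : v ≠ root := fun hc => hne (by rw [hc, hroot, ← hc])
    set D : Set V := {w | ∃ t, p^[t] w = v} with hD
    have hvD : v ∈ D := ⟨0, rfl⟩
    have hpvD : p v ∉ D := by
      rintro ⟨t, ht⟩
      have := hiter t (p v)
      rw [ht] at this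
      have := hh v hvroot
      omega
    obtain ⟨d, hdmem, hd1, hd2⟩ := q.exists_boundary_dart D hvD hpvD
    have hdadj := d.adj
    rw [hadj] at hdadj
    obtain ⟨hne', hcase⟩ := hdadj
    rcases hcase with hc | hc
    · -- p d.fst = d.snd
      obtain ⟨t, ht⟩ := hd1
      cases t with
      | zero =>
        simp only [Function.iterate_zero, id] at ht
        have hedge : s(v, p v) = d.edge := by rw [← ht, hc]; rfl
        rw [hedge]
        exact List.mem_map_of_mem (f := SimpleGraph.Dart.edge) hdmem
      | succ s =>
        exfalso
        exact hd2 ⟨s, by rw [← hc, ← Function.iterate_succ_apply, ht]⟩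
    · -- p d.snd = d.fst: then d.snd ∈ D, contradiction
      exfalso
      obtain ⟨t, ht⟩ := hd1
      exact hd2 ⟨t + 1, by rw [Function.iterate_succ_apply, hc, ht]⟩
  intro u v huv
  rw [SimpleGraph.isBridge_iff_adj_and_forall_walk_mem_edges]
  refine fun q => ?_
  have hadjuv := (hadj u v).mp huv
  obtain ⟨hne, hc | hc⟩ := hadjuv
  · exact key u v hc hne q
  · have := key v u hc hne.symm q.reverse
    rw [SimpleGraph.Walk.edges_reverse, List.mem_reverse] at this
    rwa [Sym2.eq_swap]
def gfun (k m : ℕ) (j : ℕ) : ℕ :=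
  if j < m then j else if j - m < k then 0 else (j - m - k) / (k - 1) + 1

lemma gfun_lt (k m n : ℕ) (hk : 1 ≤ k) (hm : 1 ≤ m) (hn : n ≤ k * m + 1)
    (j : ℕ) (hj : j < n) : gfun k m j < m := by
  unfold gfun
  split_ifs with h1 h2
  · exact h1
  · exact hm
  · push_neg at h1 h2
    have hk2 : 2 ≤ k := by
      rcases Nat.lt_or_ge k 2 with h | h
      · interval_cases k <;> omega
      · exact h
    have hm2 : 2 ≤ m := by
      rcases Nat.lt_or_ge m 2 with h | h
      · interval_cases m <;> omega
      · exact h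
    have hdiv : (j - m - k) / (k - 1) < m - 1 := by
      rw [Nat.div_lt_iff_lt_mul (by omega : 0 < k - 1)]
      have key : (m - 1) * (k - 1) + m + k = k * m + 1 := by
        obtain ⟨m', rfl⟩ : ∃ m', m = m' + 1 := ⟨m - 1, by omega⟩
        obtain ⟨k', rfl⟩ : ∃ k', k = k' + 1 := ⟨k - 1, by omega⟩
        simp only [Nat.add_sub_cancel]
        ring
      omega
    omega

def Pfun (k m n : ℕ) (hk : 1 ≤ k) (hm : 1 ≤ m) (hmn : m ≤ n) (hn : n ≤ k * m + 1) :
    Fin n ⊕ Fin m → Fin n ⊕ Fin m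
  | Sum.inl j => Sum.inr ⟨gfun k m j, gfun_lt k m n hk hm hn j j.2⟩
  | Sum.inr i => if h : (i : ℕ) = 0 then Sum.inr i
      else Sum.inl ⟨(i : ℕ) - 1, by have := i.2; omega⟩

def Hfun (k m n : ℕ) : Fin n ⊕ Fin m → ℕ
  | Sum.inl j => 2 * gfun k m j + 1
  | Sum.inr i => 2 * (i : ℕ)

lemma Pfun_root (k m n : ℕ) (hk : 1 ≤ k) (hm : 1 ≤ m) (hmn : m ≤ n) (hn : n ≤ k * m + 1) :
    Pfun k m n hk hm hmn hn (Sum.inr ⟨0, hm⟩) = Sum.inr ⟨0, hm⟩ := by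
  simp [Pfun]

lemma Hfun_dec (k m n : ℕ) (hk : 1 ≤ k) (hm : 1 ≤ m) (hmn : m ≤ n) (hn : n ≤ k * m + 1)
    (w : Fin n ⊕ Fin m) (hw : w ≠ Sum.inr ⟨0, hm⟩) :
    Hfun k m n (Pfun k m n hk hm hmn hn w) < Hfun k m n w := by
  rcases w with j | i
  · simp [Pfun, Hfun]
  · have hi : (i : ℕ) ≠ 0 := by
      intro hc
      exact hw (by rw [Sum.inr.injEq]; exact Fin.ext hc)
    rw [Pfun, dif_neg hi]
    have him : (i : ℕ) - 1 < m := by have := i.2; omega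
    simp only [Hfun]
    rw [gfun, if_pos him]
    omega

lemma child_bound (k m n : ℕ) (hk : 1 ≤ k) (hm : 1 ≤ m) (hmn : m ≤ n) (hn : n ≤ k * m + 1)
    (w : Fin n ⊕ Fin m) :
    {x | Pfun k m n hk hm hmn hn x = w ∧ x ≠ w}.ncard ≤
      if w = Sum.inr ⟨0, hm⟩ then k + 1 else k := by
  set P := Pfun k m n hk hm hmn hn with hP
  rcases w with j | i
  · -- children of an R-vertex: at most one (the next B vertex)
    rw [if_neg (by simp)]
    have hshape : ∀ x ∈ {x | P x = Sum.inl j ∧ x ≠ Sum.inl j},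
        ∃ i : Fin m, x = Sum.inr i ∧ (i : ℕ) ≠ 0 ∧ (i : ℕ) - 1 = (j : ℕ) := by
      rintro x ⟨hx1, hx2⟩
      rcases x with j' | i
      · rw [hP, Pfun] at hx1; exact absurd hx1 (by simp)
      · have h0 : (i : ℕ) ≠ 0 := by
          intro hc
          rw [hP, Pfun, dif_pos hc] at hx1
          exact absurd hx1 (by simp)
        rw [hP, Pfun, dif_neg h0, Sum.inl.injEq] at hx1
        exact ⟨i, rfl, h0, congrArg Fin.val hx1⟩
    calc {x | P x = Sum.inl j ∧ x ≠ Sum.inl j}.ncard ≤ 1 := by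
          rw [Set.ncard_le_one (Set.toFinite _)]
          intro a ha b hb
          obtain ⟨ia, rfl, ha1, ha2⟩ := hshape a ha
          obtain ⟨ib, rfl, hb1, hb2⟩ := hshape b hb
          rw [Sum.inr.injEq]
          exact Fin.ext (by omega)
      _ ≤ k := hk
  · -- children of a B-vertex
    have hshape : ∀ x ∈ {x | P x = Sum.inr i ∧ x ≠ Sum.inr i},
        ∃ j : Fin n, x = Sum.inl j ∧ gfun k m (j : ℕ) = (i : ℕ) := by
      rintro x ⟨hx1, hx2⟩
      rcases x with j | i'
      · refine ⟨j, rfl, ?_⟩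
        rw [hP, Pfun, Sum.inr.injEq] at hx1
        exact congrArg Fin.val hx1
      · exfalso
        by_cases h0 : (i' : ℕ) = 0
        · rw [hP, Pfun, dif_pos h0] at hx1
          exact hx2 hx1
        · rw [hP, Pfun, dif_neg h0] at hx1
          exact absurd hx1 (by simp)
    set s : Set (Fin n ⊕ Fin m) := {x | P x = Sum.inr i ∧ x ≠ Sum.inr i} with hs
    set F : (Fin n ⊕ Fin m) → ℕ := Sum.elim (fun j => (j : ℕ)) (fun _ => 0) with hF
    have hinj : Set.InjOn F s := by
      intro a ha b hb hab
      obtain ⟨ja, rfl, _⟩ := hshape a ha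
      obtain ⟨jb, rfl, _⟩ := hshape b hb
      simp only [hF, Sum.elim_inl] at hab
      rw [Sum.inl.injEq]
      exact Fin.ext hab
    rw [← Set.ncard_image_of_injOn hinj]
    by_cases hi : (i : ℕ) = 0
    · rw [if_pos (by rw [Sum.inr.injEq]; exact Fin.ext hi)]
      have hsub : F '' s ⊆ ↑(insert 0 (Finset.Ico m (m + k))) := by
        rintro y ⟨x, hx, rfl⟩
        obtain ⟨j, rfl, hg⟩ := hshape x hx
        simp only [hF, Sum.elim_inl, Finset.coe_insert, Set.mem_insert_iff,
          Finset.coe_Ico, Set.mem_Ico]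
        rw [hi] at hg
        rw [gfun] at hg
        split_ifs at hg with h1 h2
        · left; omega
        · right; push_neg at h1; exact ⟨h1, by omega⟩
      calc (F '' s).ncard ≤ (↑(insert 0 (Finset.Ico m (m + k)) : Finset ℕ) : Set ℕ).ncard :=
            Set.ncard_le_ncard hsub (Set.toFinite _)
        _ ≤ k + 1 := by
            rw [Set.ncard_coe_finset]
            calc (insert 0 (Finset.Ico m (m + k))).card ≤ (Finset.Ico m (m + k)).card + 1 :=
                  Finset.card_insert_le _ _
              _ ≤ k + 1 := by rw [Nat.card_Ico]; omega
    · rw [if_neg (fun hc => hi (by rw [Sum.inr.injEq] at hc; exact congrArg Fin.val hc))]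
      set A := ((i : ℕ) - 1) * (k - 1) with hA
      have hsub : F '' s ⊆ ↑(insert (i : ℕ) (Finset.Ico (m + k + A) (m + k + A + (k - 1)))) := by
        rintro y ⟨x, hx, rfl⟩
        obtain ⟨j, rfl, hg⟩ := hshape x hx
        simp only [hF, Sum.elim_inl, Finset.coe_insert, Set.mem_insert_iff,
          Finset.coe_Ico, Set.mem_Ico]
        rw [gfun] at hg
        split_ifs at hg with h1 h2
        · left; omega
        · omega
        · right
          push_neg at h1 h2
          have hdiv : ((j : ℕ) - m - k) / (k - 1) = (i : ℕ) - 1 := by omega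
          rcases Nat.eq_or_lt_of_le hk with hk1 | hk2
          · -- k = 1 : impossible since j - m ≥ 1 but n ≤ m + 1
            exfalso
            rw [← hk1] at h2 hn
            have := j.2
            omega
          · have hkpos : 0 < k - 1 := by omega
            have hle : A ≤ (j : ℕ) - m - k := by
              rw [hA]
              exact (Nat.le_div_iff_mul_le hkpos).mp (le_of_eq hdiv.symm)
            have hlt : (j : ℕ) - m - k < A + (k - 1) := by
              have h' : ((j : ℕ) - m - k) / (k - 1) < ((i : ℕ) - 1) + 1 := by omega
              have := (Nat.div_lt_iff_lt_mul hkpos).mp h'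
              calc (j : ℕ) - m - k < (((i : ℕ) - 1) + 1) * (k - 1) := this
                _ = A + (k - 1) := by rw [hA, Nat.succ_mul]
            constructor <;> omega
      calc (F '' s).ncard
          ≤ (↑(insert (i : ℕ) (Finset.Ico (m + k + A) (m + k + A + (k - 1))) : Finset ℕ) :
              Set ℕ).ncard := Set.ncard_le_ncard hsub (Set.toFinite _)
        _ ≤ k := by
            rw [Set.ncard_coe_finset]
            calc (insert (i : ℕ) (Finset.Ico (m + k + A) (m + k + A + (k - 1)))).card
                ≤ (Finset.Ico (m + k + A) (m + k + A + (k - 1))).card + 1 :=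
                  Finset.card_insert_le _ _
              _ ≤ k := by rw [Nat.card_Ico]; omega

/-- If `R` and `B` are disjoint finite sets with
`1 ≤ |B| ≤ |R| ≤ k|B| + 1`, `k ≥ 1`, then the complete bipartite graph with parts
`R` and `B` has a spanning tree of maximum degree at most `k + 1`. -/
theorem statement_9 {α : Type*} [DecidableEq α] (R B : Finset α) (hdisj : Disjoint R B)
    (k : ℕ) (hk : 1 ≤ k) (hB : 1 ≤ B.card) (hBR : B.card ≤ R.card)
    (hRk : R.card ≤ k * B.card + 1) :
    ∃ G : SimpleGraph {x : α // x ∈ R ∪ B},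
      (∀ u v, G.Adj u v → ((u.1 ∈ R ∧ v.1 ∈ B) ∨ (u.1 ∈ B ∧ v.1 ∈ R))) ∧
      G.IsTree ∧ ∀ v, deg G v ≤ k + 1 := by
  classical
  set m := B.card with hmdef
  set n := R.card with hndef
  have hmn : m ≤ n := hBR
  have hn : n ≤ k * m + 1 := hRk
  have hm : 1 ≤ m := hB
  let eR : {x // x ∈ R} ≃ Fin n := Fintype.equivFinOfCardEq (Fintype.card_coe R)
  let eB : {x // x ∈ B} ≃ Fin m := Fintype.equivFinOfCardEq (Fintype.card_coe B)
  let f : (Fin n ⊕ Fin m) → {x : α // x ∈ R ∪ B} :=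
    Sum.elim (fun j => ⟨(eR.symm j).1, Finset.mem_union_left _ (eR.symm j).2⟩)
             (fun i => ⟨(eB.symm i).1, Finset.mem_union_right _ (eB.symm i).2⟩)
  have hfR : ∀ j, (f (Sum.inl j)).1 ∈ R := fun j => (eR.symm j).2
  have hfB : ∀ i, (f (Sum.inr i)).1 ∈ B := fun i => (eB.symm i).2
  have hfinj : Function.Injective f := by
    rintro (j1 | i1) (j2 | i2) hf
    · rw [Sum.inl.injEq]
      have hv := congrArg Subtype.val hf
      exact eR.symm.injective (Subtype.ext hv)
    · exact absurd (hfB i2) (Finset.disjoint_left.mp hdisj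
        ((congrArg Subtype.val hf) ▸ hfR j1))
    · exact absurd (hfB i1) (Finset.disjoint_left.mp hdisj
        ((congrArg Subtype.val hf).symm ▸ hfR j2))
    · rw [Sum.inr.injEq]
      have hv := congrArg Subtype.val hf
      exact eB.symm.injective (Subtype.ext hv)
  have hfsurj : Function.Surjective f := by
    intro v
    by_cases hv : v.1 ∈ R
    · refine ⟨Sum.inl (eR ⟨v.1, hv⟩), ?_⟩
      show (⟨(eR.symm (eR ⟨v.1, hv⟩)).1, _⟩ : {x : α // x ∈ R ∪ B}) = v
      apply Subtype.ext
      rw [Equiv.symm_apply_apply]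
    · have hvB : v.1 ∈ B := by
        rcases Finset.mem_union.mp v.2 with h | h
        · exact absurd h hv
        · exact h
      refine ⟨Sum.inr (eB ⟨v.1, hvB⟩), ?_⟩
      apply Subtype.ext
      show (eB.symm (eB ⟨v.1, hvB⟩)).1 = v.1
      rw [Equiv.symm_apply_apply]
  let E : (Fin n ⊕ Fin m) ≃ {x : α // x ∈ R ∪ B} := Equiv.ofBijective f ⟨hfinj, hfsurj⟩
  have hEf : ∀ w, E w = f w := fun _ => rfl
  set P := Pfun k m n hk hm hmn hn with hPdef
  set p : {x : α // x ∈ R ∪ B} → {x : α // x ∈ R ∪ B} :=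
    fun v => E (P (E.symm v)) with hpdef
  set root : {x : α // x ∈ R ∪ B} := E (Sum.inr ⟨0, hm⟩) with hrootdef
  have hproot : p root = root := by
    simp only [hpdef, hrootdef, Equiv.symm_apply_apply, hPdef, Pfun_root]
  set h : {x : α // x ∈ R ∪ B} → ℕ := fun v => Hfun k m n (E.symm v) with hhdef
  have hhd : ∀ v, v ≠ root → h (p v) < h v := by
    intro v hv
    simp only [hhdef, hpdef, Equiv.symm_apply_apply]
    apply Hfun_dec
    intro hc
    exact hv (by rw [hrootdef, ← hc, Equiv.apply_symm_apply])
  refine ⟨SimpleGraph.fromRel (fun u v => p u = v), ?_, ?_, ?_⟩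
  · -- bipartite
    have hside : ∀ u v, u ≠ v → p u = v →
        (u.1 ∈ R ∧ v.1 ∈ B) ∨ (u.1 ∈ B ∧ v.1 ∈ R) := by
      intro u v hne hpu
      obtain ⟨w, rfl⟩ := E.surjective u
      rw [hpdef] at hpu
      simp only [Equiv.symm_apply_apply] at hpu
      rcases w with j | i
      · left
        refine ⟨hfR j, ?_⟩
        rw [hPdef, Pfun] at hpu
        rw [← hpu, hEf]
        exact hfB _
      · by_cases h0 : (i : ℕ) = 0
        · exfalso
          rw [hPdef, Pfun, dif_pos h0] at hpu
          exact hne hpu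
        · right
          refine ⟨hfB i, ?_⟩
          rw [hPdef, Pfun, dif_neg h0] at hpu
          rw [← hpu, hEf]
          exact hfR _
    intro u v huv
    rw [SimpleGraph.fromRel_adj] at huv
    obtain ⟨hne, hc | hc⟩ := huv
    · exact hside u v hne hc
    · rcases hside v u hne.symm hc with ⟨h1, h2⟩ | ⟨h1, h2⟩
      · exact Or.inr ⟨h2, h1⟩
      · exact Or.inl ⟨h2, h1⟩
  · exact tree_of_parent p root hproot h hhd
  · -- degree bound
    intro v
    have hset : {w | p w = v ∧ w ≠ v} =
        E '' {x | P x = E.symm v ∧ x ≠ E.symm v} := by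
      rw [Equiv.image_eq_preimage_symm]
      ext w
      simp only [Set.mem_setOf_eq, Set.mem_preimage]
      constructor
      · rintro ⟨h1, h2⟩
        refine ⟨?_, fun hc => h2 (by rw [← E.apply_symm_apply w, hc, E.apply_symm_apply])⟩
        simp only [hpdef] at h1
        rw [← h1, Equiv.symm_apply_apply]
      · rintro ⟨h1, h2⟩
        refine ⟨?_, fun hc => h2 (by rw [hc])⟩
        show E (P (E.symm w)) = v
        rw [h1, Equiv.apply_symm_apply]
    have hcard : {w | p w = v ∧ w ≠ v}.ncard =
        {x | P x = E.symm v ∧ x ≠ E.symm v}.ncard := by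
      rw [hset, Set.ncard_image_of_injective _ E.injective]
    set G := SimpleGraph.fromRel (fun u v => p u = v) with hG
    have hnbr : ∀ w, G.Adj v w → (w = p v ∨ (p w = v ∧ w ≠ v)) := by
      intro w hw
      rw [hG, SimpleGraph.fromRel_adj] at hw
      obtain ⟨hne, hc | hc⟩ := hw
      · exact Or.inl hc.symm
      · exact Or.inr ⟨hc, fun hcc => hne hcc.symm⟩
    show (G.neighborSet v).ncard ≤ k + 1
    by_cases hv : E.symm v = Sum.inr ⟨0, hm⟩
    · -- v is the root
      have hvroot : v = root := by rw [hrootdef, ← hv, Equiv.apply_symm_apply]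
      have hsub : G.neighborSet v ⊆ {w | p w = v ∧ w ≠ v} := by
        intro w hw
        rcases hnbr w hw with hc | hc
        · exfalso
          rw [hvroot, hproot] at hc
          rw [hc] at hw
          exact G.loopless.irrefl _ (hvroot ▸ hw)
        · exact hc
      calc (G.neighborSet v).ncard ≤ {w | p w = v ∧ w ≠ v}.ncard :=
            Set.ncard_le_ncard hsub (Set.toFinite _)
        _ ≤ k + 1 := by
            rw [hcard]
            have := child_bound k m n hk hm hmn hn (E.symm v)
            rw [if_pos hv, ← hPdef] at this
            exact this
    · have hsub : G.neighborSet v ⊆ insert (p v) {w | p w = v ∧ w ≠ v} := by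
        intro w hw
        rcases hnbr w hw with hc | hc
        · exact Set.mem_insert_iff.mpr (Or.inl hc)
        · exact Set.mem_insert_iff.mpr (Or.inr hc)
      calc (G.neighborSet v).ncard ≤ (insert (p v) {w | p w = v ∧ w ≠ v}).ncard :=
            Set.ncard_le_ncard hsub (Set.toFinite _)
        _ ≤ {w | p w = v ∧ w ≠ v}.ncard + 1 := Set.ncard_insert_le _ _
        _ ≤ k + 1 := by
            rw [hcard]
            have := child_bound k m n hk hm hmn hn (E.symm v)
            rw [if_neg hv, ← hPdef] at this
            omega
end
end

section
/- Let R and B be disjoint finite sets of red and blue points in the plane with R ∪ B in general position, |B| ≥ 1, and k(|B|−1) < |R| ≤ k|B| for an integer k ≥ 2; set α = |R| − k(|B|−1). Suppose b₁, b, b₂ are blue points that are consecutive in counter-clockwise order among the vertices of the convex hull of R ∪ B. Then there exist points r₁, r_α ∈ R (possibly equal) such that: (i) the points of (R ∪ B) − {b} lying in the closed angular wedge with apex b bounded by the ray from b through r₁ and the ray from b through r_α (with r₁ preceding r_α in the clockwise radial order around b starting at b₁) are exactly α points, all of them red; (ii) |R₁| = k|B₁| + 1, where R₁ (resp. B₁)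 is the set of points of R (resp. B − {b}) lying on the line ℓ(b, r₁) or strictly on the side of ℓ(b, r₁) containing b₁; and (iii) |R₂| = k|B₂| + 1, where R₂ (resp. B₂) is the set of points of R (resp. B − {b}) lying on the line ℓ(b, r_α) or strictly on the side of ℓ(b, r_α) containing b₂. -/
open scoped Classical

noncomputable section

/-- The planar cross product of two vectors. -/
def cross (u v : Pt) : ℝ := u.1 * v.2 - u.2 * v.1

/-- Signed orientation of the triple `(p, q, x)`: positive iff `x` lies strictly to
the left of the directed line from `p` to `q`, zero iff the three points are
collinear. -/
def sgn3 (p q x : Pt) : ℝ := cross (q - p) (x - p)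

/-- `[p, q]` is an edge of the convex hull of `P`, directed so that all of `P` lies
on the left of (or on) the directed line from `p` to `q`; successive such edges list
the hull vertices in counter-clockwise order. -/
def IsCCWHullEdge (P : Set Pt) (p q : Pt) : Prop :=
  p ∈ P ∧ q ∈ P ∧ p ≠ q ∧ ∀ x ∈ P, 0 ≤ sgn3 p q x

/- ### Auxiliary material -/

lemma cross_antisymm (a b : Pt) : cross a b = - cross b a := by unfold cross; ring

lemma crossPt_self (a : Pt) : cross a a = 0 := by unfold cross; ring

lemma sgn3_rebase (p q x : Pt) : sgn3 p q x = - cross (p - q) (x - q) := by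
  simp only [sgn3, cross, Prod.fst_sub, Prod.snd_sub]; ring

lemma smul_eq_of_cross (u w : Pt) (h : cross u w = 0) (hu : u ≠ 0) :
    ∃ t : ℝ, t • u = w := by
  have hne : u.1 ≠ 0 ∨ u.2 ≠ 0 := by
    by_contra hc; push_neg at hc; exact hu (Prod.ext hc.1 hc.2)
  unfold cross at h
  rcases hne with h1 | h1
  · refine ⟨w.1 / u.1, Prod.ext ?_ ?_⟩
    · simp; field_simp
    · simp; field_simp; nlinarith [h]
  · refine ⟨w.2 / u.2, Prod.ext ?_ ?_⟩
    · simp; field_simp; nlinarith [h]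
    · simp; field_simp

lemma collinear_of_cross (b p q : Pt) (h : cross (p - b) (q - b) = 0) :
    Collinear ℝ ({b, p, q} : Set Pt) := by
  by_cases hpb : p = b
  · subst hpb
    have : ({p, p, q} : Set Pt) = {p, q} := by simp
    rw [this]; exact collinear_pair ℝ p q
  · rw [collinear_iff_of_mem (Set.mem_insert b {p, q})]
    refine ⟨p - b, fun x hx => ?_⟩
    have hx' : x = b ∨ x = p ∨ x = q := by simpa using hx
    have hu : p - b ≠ 0 := sub_ne_zero.mpr hpb
    rcases hx' with rfl | rfl | rfl
    · exact ⟨0, by simp⟩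
    · exact ⟨1, by simp⟩
    · obtain ⟨t, ht⟩ := smul_eq_of_cross _ _ h hu
      exact ⟨t, by rw [ht]; simp⟩

lemma div_le_div_iff_neg {a b c d : ℝ} (hb : b < 0) (hd : d < 0) :
    a / b ≤ c / d ↔ a * d ≤ c * b := by
  rw [← neg_div_neg_eq a b, ← neg_div_neg_eq c d,
    div_le_div_iff₀ (neg_pos.mpr hb) (neg_pos.mpr hd)]
  constructor <;> intro h <;> nlinarith [h]

/-- Radial sorting key around `b`, measured from the ray `b → b₁` to the ray `b → b₂`. -/
def theta (b b₁ b₂ : Pt) (x : Pt) : ℝ :=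
  cross (b₁ - b) (x - b) / (cross (b₁ - b) (x - b) + cross (x - b) (b₂ - b))

lemma theta_le_theta (b b₁ b₂ : Pt) {x y : Pt}
    (hx3 : cross (b₁-b) (x-b) + cross (x-b) (b₂-b) < 0)
    (hy3 : cross (b₁-b) (y-b) + cross (y-b) (b₂-b) < 0)
    (hD : cross (b₁-b) (b₂-b) < 0) :
    (theta b b₁ b₂ x ≤ theta b b₁ b₂ y ↔ cross (x-b) (y-b) ≤ 0) := by
  unfold theta
  rw [div_le_div_iff_neg hx3 hy3]
  have hplk : cross (b₁-b) (b₂-b) * cross (x-b) (y-b)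
      = cross (b₁-b) (y-b) * cross (x-b) (b₂-b)
        - cross (b₁-b) (x-b) * cross (y-b) (b₂-b) := by
    unfold cross; ring
  set Ax := cross (b₁-b) (x-b)
  set Bx := cross (x-b) (b₂-b)
  set Ay := cross (b₁-b) (y-b)
  set By := cross (y-b) (b₂-b)
  set D := cross (b₁-b) (b₂-b)
  constructor
  · intro h
    have h2 : 0 ≤ D * cross (x-b) (y-b) := by nlinarith [h]
    by_contra hcc
    push_neg at hcc
    nlinarith [mul_neg_of_neg_of_pos hD hcc]
  · intro h
    have h2 : 0 ≤ D * cross (x-b) (y-b) := by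
      nlinarith [mul_nonneg (le_of_lt (neg_pos.mpr hD)) (neg_nonneg.mpr h)]
    nlinarith [h2]

lemma mul_sign1 {a c : ℝ} (hc : 0 < c) : a * c ≤ 0 ↔ a ≤ 0 := by
  constructor <;> intro h <;> nlinarith
lemma mul_sign2 {a c : ℝ} (hc : 0 < c) : 0 ≤ a * c ↔ 0 ≤ a := by
  constructor <;> intro h <;> nlinarith
lemma mul_sign3 {a c : ℝ} (hc : c < 0) : a * c ≤ 0 ↔ 0 ≤ a := by
  constructor <;> intro h <;> nlinarith
lemma mul_sign4 {a c : ℝ} (hc : c < 0) : 0 ≤ a * c ↔ a ≤ 0 := by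
  constructor <;> intro h <;> nlinarith

section Rank
variable (S : Finset Pt) (θ : Pt → ℝ)

/-- The rank of a point among the values of the key `θ` on `S`. -/
def rnk (x : Pt) : ℕ := ((S.image θ).filter (fun t => t ≤ θ x)).card

variable {S θ}

lemma rnk_mono {x y : Pt} (h : θ x ≤ θ y) : rnk S θ x ≤ rnk S θ y := by
  apply Finset.card_le_card
  intro t ht
  rw [Finset.mem_filter] at *
  exact ⟨ht.1, le_trans ht.2 h⟩

lemma rnk_strict {x y : Pt} (hy : y ∈ S) (h : θ x < θ y) : rnk S θ x < rnk S θ y := by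
  apply Finset.card_lt_card
  rw [Finset.ssubset_iff_of_subset]
  · refine ⟨θ y, ?_, ?_⟩
    · rw [Finset.mem_filter]
      exact ⟨Finset.mem_image_of_mem θ hy, le_refl _⟩
    · rw [Finset.mem_filter]
      push_neg
      intro _
      exact h
  · intro t ht
    rw [Finset.mem_filter] at *
    exact ⟨ht.1, le_trans ht.2 h.le⟩

lemma rnk_le_iff {x y : Pt} (hx : x ∈ S) (hy : y ∈ S) :
    rnk S θ x ≤ rnk S θ y ↔ θ x ≤ θ y := by
  constructor
  · intro h
    by_contra hc
    push_neg at hc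
    exact absurd h (not_le.mpr (rnk_strict hx hc))
  · exact rnk_mono

lemma rnk_pos {x : Pt} (hx : x ∈ S) : 1 ≤ rnk S θ x := by
  have h1 : θ x ∈ (S.image θ).filter (fun t => t ≤ θ x) :=
    Finset.mem_filter.mpr ⟨Finset.mem_image_of_mem θ hx, le_refl _⟩
  have h2 := Finset.card_pos.mpr ⟨θ x, h1⟩
  unfold rnk
  omega

lemma rnk_le_card {x : Pt} (hinj : Set.InjOn θ S) : rnk S θ x ≤ S.card := by
  calc rnk S θ x ≤ (S.image θ).card := Finset.card_le_card (Finset.filter_subset _ _)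
  _ = S.card := Finset.card_image_of_injOn hinj

lemma rnk_inj (hinj : Set.InjOn θ S) {x y : Pt} (hx : x ∈ S) (hy : y ∈ S)
    (h : rnk S θ x = rnk S θ y) : x = y := by
  apply hinj hx hy
  exact le_antisymm ((rnk_le_iff hx hy).mp h.le) ((rnk_le_iff hy hx).mp h.ge)

lemma rnk_surj (hinj : Set.InjOn θ S) {m : ℕ} (h1 : 1 ≤ m) (h2 : m ≤ S.card) :
    ∃ x ∈ S, rnk S θ x = m := by
  have hsub : S.image (rnk S θ) ⊆ Finset.Icc 1 S.card := by
    intro t ht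
    rw [Finset.mem_image] at ht
    obtain ⟨x, hx, rfl⟩ := ht
    exact Finset.mem_Icc.mpr ⟨rnk_pos hx, rnk_le_card hinj⟩
  have hcard : (Finset.Icc 1 S.card).card ≤ (S.image (rnk S θ)).card := by
    rw [Nat.card_Icc]
    have : (S.image (rnk S θ)).card = S.card := by
      apply Finset.card_image_of_injOn
      intro x hx y hy hxy
      exact rnk_inj hinj (by exact_mod_cast hx) (by exact_mod_cast hy) hxy
    omega
  have heq := Finset.eq_of_subset_of_card_le hsub hcard
  have hm : m ∈ S.image (rnk S θ) := by
    rw [heq]; exact Finset.mem_Icc.mpr ⟨h1, h2⟩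
  rw [Finset.mem_image] at hm
  obtain ⟨x, hx, hxm⟩ := hm
  exact ⟨x, hx, hxm⟩

lemma count_step {S C : Finset Pt} {θ : Pt → ℝ} (hinj : Set.InjOn θ S) (hC : C ⊆ S)
    {m : ℕ} {x : Pt} (hx : x ∈ S) (hrx : rnk S θ x = m + 1) :
    (C.filter fun y => rnk S θ y ≤ m + 1).card
      = (C.filter fun y => rnk S θ y ≤ m).card + (if x ∈ C then 1 else 0) := by
  by_cases hxC : x ∈ C
  · rw [if_pos hxC]
    have heq : C.filter (fun y => rnk S θ y ≤ m + 1)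
        = insert x (C.filter fun y => rnk S θ y ≤ m) := by
      ext y
      simp only [Finset.mem_filter, Finset.mem_insert]
      constructor
      · rintro ⟨hyC, hy⟩
        by_cases hym : rnk S θ y ≤ m
        · exact Or.inr ⟨hyC, hym⟩
        · have : rnk S θ y = m + 1 := by omega
          exact Or.inl (rnk_inj hinj (hC hyC) hx (this.trans hrx.symm))
      · rintro (rfl | ⟨hyC, hy⟩)
        · exact ⟨hxC, by omega⟩
        · exact ⟨hyC, by omega⟩
    rw [heq, Finset.card_insert_of_notMem]
    · rw [Finset.mem_filter]
      push_neg
      intro _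
      omega
  · rw [if_neg hxC]
    have heq : C.filter (fun y => rnk S θ y ≤ m + 1) = C.filter (fun y => rnk S θ y ≤ m) := by
      apply Finset.filter_congr
      intro y hyC
      constructor
      · intro hy
        by_cases hym : rnk S θ y ≤ m
        · exact hym
        · have : rnk S θ y = m + 1 := by omega
          exact absurd (rnk_inj hinj (hC hyC) hx (this.trans hrx.symm) ▸ hyC) hxC
      · intro hy; omega
    rw [heq]
    omega

lemma count_none {S C : Finset Pt} {θ : Pt → ℝ} (hC : C ⊆ S) {m : ℕ}
    (h : ∀ x ∈ S, rnk S θ x ≠ m + 1) :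
    (C.filter fun y => rnk S θ y ≤ m + 1).card = (C.filter fun y => rnk S θ y ≤ m).card := by
  congr 1
  apply Finset.filter_congr
  intro y hyC
  have := h y (hC hyC)
  constructor
  · intro hy; omega
  · intro hy; omega

end Rank

/-- Discrete intermediate value theorem for functions moving up by at most 1. -/
lemma hit_level (F : ℕ → ℤ) (hstep : ∀ m, F (m+1) ≤ F m + 1) (c : ℤ) :
    ∀ bnd a, a ≤ bnd → F a ≤ c → c < F bnd → ∃ t, a ≤ t ∧ t < bnd ∧ F t = c := by
  intro bnd
  induction bnd with
  | zero =>
    intro a ha h1 h2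
    have : a = 0 := Nat.le_zero.mp ha
    subst this
    omega
  | succ n ih =>
    intro a ha h1 h2
    have han : a ≤ n := by
      rcases Nat.lt_succ_iff_lt_or_eq.mp (Nat.lt_succ_of_le ha) with h | h
      · omega
      · subst h; omega
    by_cases hc : c < F n
    · obtain ⟨t, h3, h4, h5⟩ := ih a han h1 hc
      exact ⟨t, h3, by omega, h5⟩
    · push_neg at hc
      have h6 := hstep n
      have : F n = c := by omega
      exact ⟨n, han, by omega, this⟩

/-- Lemma on three consecutive blue hull points.
Let `k(|B|-1) < |R| ≤ k|B|`, `k ≥ 2`, `|B| ≥ 1`, `α = |R| - k(|B|-1)`, and let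
`b₁, b, b₂` be blue points consecutive in counter-clockwise order on the convex hull
of `R ∪ B`. Then there are red points `r₁, r_α` (possibly equal), with `r₁` preceding
`r_α` in the clockwise radial order around `b` starting at `b₁`, such that:
(i) the closed angular wedge at `b` between the rays `b→r₁` and `b→r_α` contains
exactly `α` points of `(R ∪ B) \ {b}`, all of them red;
(ii) `|R₁| = k|B₁| + 1` for the points on `ℓ(b,r₁)` or strictly on its `b₁`-side;
(iii) `|R₂| = k|B₂| + 1` for the points on `ℓ(b,r_α)` or strictly on its `b₂`-side. -/
theorem statement_12 (R B : Finset Pt) (hdisj : Disjoint R B)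
    (hgp : GenPos (↑(R ∪ B) : Set Pt)) (k : ℕ) (hk : 2 ≤ k) (hB : 1 ≤ B.card)
    (hlo : k * (B.card - 1) < R.card) (hhi : R.card ≤ k * B.card)
    (α : ℕ) (hα : α = R.card - k * (B.card - 1))
    (b₁ b b₂ : Pt) (hb₁ : b₁ ∈ B) (hb : b ∈ B) (hb₂ : b₂ ∈ B)
    (hedge₁ : IsCCWHullEdge (↑(R ∪ B) : Set Pt) b₁ b)
    (hedge₂ : IsCCWHullEdge (↑(R ∪ B) : Set Pt) b b₂) :
    ∃ r₁ rα : Pt, r₁ ∈ R ∧ rα ∈ R ∧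
      -- `r₁` lies in the wedge (weakly before `r_α`) and vice versa:
      sgn3 b rα r₁ * sgn3 b rα b₂ ≤ 0 ∧
      sgn3 b r₁ rα * sgn3 b r₁ b₁ ≤ 0 ∧
      -- (i) exactly `α` points of `(R ∪ B) \ {b}` lie in the closed wedge, all red:
      (((R ∪ B).erase b).filter (fun x =>
          sgn3 b r₁ x * sgn3 b r₁ b₁ ≤ 0 ∧ sgn3 b rα x * sgn3 b rα b₂ ≤ 0)).card = α ∧
      ((R ∪ B).erase b).filter (fun x =>
          sgn3 b r₁ x * sgn3 b r₁ b₁ ≤ 0 ∧ sgn3 b rα x * sgn3 b rα b₂ ≤ 0) ⊆ R ∧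
      -- (ii) |R₁| = k |B₁| + 1:
      (R.filter (fun x => 0 ≤ sgn3 b r₁ x * sgn3 b r₁ b₁)).card
        = k * ((B.erase b).filter (fun x => 0 ≤ sgn3 b r₁ x * sgn3 b r₁ b₁)).card + 1 ∧
      -- (iii) |R₂| = k |B₂| + 1:
      (R.filter (fun x => 0 ≤ sgn3 b rα x * sgn3 b rα b₂)).card
        = k * ((B.erase b).filter (fun x => 0 ≤ sgn3 b rα x * sgn3 b rα b₂)).card + 1 := by
  classical
  obtain ⟨hb₁P, hbP, hb₁b, hL1⟩ := hedge₁
  obtain ⟨hbP', hb₂P, hbb₂, hL2⟩ := hedge₂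
  have hb₁U : b₁ ∈ R ∪ B := Finset.mem_union_right R hb₁
  have hbU : b ∈ R ∪ B := Finset.mem_union_right R hb
  have hb₂U : b₂ ∈ R ∪ B := Finset.mem_union_right R hb₂
  -- halfplane conditions at b
  have hA : ∀ x ∈ R ∪ B, cross (b₁ - b) (x - b) ≤ 0 := by
    intro x hx
    have h := hL1 x (Finset.mem_coe.mpr hx)
    rw [sgn3_rebase] at h; linarith
  have hBv : ∀ x ∈ R ∪ B, cross (x - b) (b₂ - b) ≤ 0 := by
    intro x hx
    have h := hL2 x (Finset.mem_coe.mpr hx)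
    have he : sgn3 b b₂ x = cross (b₂ - b) (x - b) := rfl
    rw [he, cross_antisymm] at h; linarith
  -- non-collinearity around b
  have hNC : ∀ x ∈ R ∪ B, ∀ y ∈ R ∪ B, b ≠ x → b ≠ y → x ≠ y →
      cross (x - b) (y - b) ≠ 0 := by
    intro x hx y hy h1 h2 h3 hc
    exact hgp b (Finset.mem_coe.mpr hbU) x (Finset.mem_coe.mpr hx) y (Finset.mem_coe.mpr hy)
      h1 h2 h3 (collinear_of_cross b x y hc)
  -- numeric facts
  have hbR : b ∉ R := fun h => Finset.disjoint_left.mp hdisj h hb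
  set K := k * (B.card - 1) with hK
  have hKk : k * B.card = K + k := by
    rw [hK]
    have h1 : B.card - 1 + 1 = B.card := Nat.sub_add_cancel hB
    calc k * B.card = k * ((B.card - 1) + 1) := by rw [h1]
    _ = k * (B.card - 1) + k := by ring
  rw [hKk] at hhi
  have hα1 : 1 ≤ α := by omega
  have hαk : α ≤ k := by omega
  have hαZ : (α : ℤ) = (R.card : ℤ) - K := by omega
  have hα1Z : 1 ≤ (α : ℤ) := by exact_mod_cast hα1
  have hαkZ : (α : ℤ) ≤ (k : ℤ) := by exact_mod_cast hαk
  have hkZ : (2 : ℤ) ≤ (k : ℤ) := by exact_mod_cast hk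
  -- b₁ ≠ b₂
  have hb₁₂ : b₁ ≠ b₂ := by
    intro he
    obtain ⟨r, hr⟩ := Finset.card_pos.mp (show 0 < R.card by omega)
    have hrU : r ∈ R ∪ B := Finset.mem_union_left B hr
    have hrb : b ≠ r := fun h => hbR (h ▸ hr)
    have hrb₁ : b₁ ≠ r := fun h => Finset.disjoint_left.mp hdisj (h ▸ hr) hb₁
    have h1 := hA r hrU
    have h2 := hBv r hrU
    rw [← he] at h2
    have h3 : cross (b₁ - b) (r - b) = 0 := by
      have := cross_antisymm (r - b) (b₁ - b)
      linarith
    exact hNC b₁ hb₁U r hrU hb₁b.symm hrb hrb₁ h3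
  -- the apex cone is salient
  have hD : cross (b₁ - b) (b₂ - b) < 0 :=
    lt_of_le_of_ne (hA b₂ hb₂U) (hNC b₁ hb₁U b₂ hb₂U hb₁b.symm hbb₂ hb₁₂)
  set S := (R ∪ B).erase b with hSdef
  have hRS : ∀ x ∈ R, x ∈ S :=
    fun x hx => Finset.mem_erase.mpr ⟨fun he => hbR (he ▸ hx), Finset.mem_union_left B hx⟩
  have hBS : ∀ x ∈ B.erase b, x ∈ S :=
    fun x hx => Finset.mem_erase.mpr
      ⟨(Finset.mem_erase.mp hx).1, Finset.mem_union_right R (Finset.mem_of_mem_erase hx)⟩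
  have hSU : ∀ x ∈ S, x ∈ R ∪ B := fun x hx => (Finset.mem_erase.mp hx).2
  have hSb : ∀ x ∈ S, x ≠ b := fun x hx => (Finset.mem_erase.mp hx).1
  have hsplit : ∀ x ∈ S, x ∈ R ∨ x ∈ B.erase b := by
    intro x hx
    rcases Finset.mem_union.mp (hSU x hx) with h | h
    · exact Or.inl h
    · exact Or.inr (Finset.mem_erase.mpr ⟨hSb x hx, h⟩)
  -- denominators of theta are negative on S
  have hden : ∀ x ∈ S, cross (b₁-b) (x-b) + cross (x-b) (b₂-b) < 0 := by
    intro x hx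
    have h1 := hA x (hSU x hx)
    have h2 := hBv x (hSU x hx)
    rcases eq_or_lt_of_le h1 with he1 | hl1
    · have hx_b₁ : x = b₁ := by
        by_contra hne
        exact hNC b₁ hb₁U x (hSU x hx) hb₁b.symm (Ne.symm (hSb x hx))
          (Ne.symm hne) he1
      rw [hx_b₁]
      have := crossPt_self (b₁ - b)
      linarith
    · rcases eq_or_lt_of_le h2 with he2 | hl2
      · have hx_b₂ : x = b₂ := by
          by_contra hne
          exact hNC x (hSU x hx) b₂ hb₂U (Ne.symm (hSb x hx)) hbb₂ hne he2
        rw [hx_b₂]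
        have := crossPt_self (b₂ - b)
        linarith
      · linarith
  set θ := theta b b₁ b₂ with hθdef
  have hord : ∀ x ∈ S, ∀ y ∈ S, (θ x ≤ θ y ↔ cross (x-b) (y-b) ≤ 0) :=
    fun x hx y hy => theta_le_theta b b₁ b₂ (hden x hx) (hden y hy) hD
  have hinj : Set.InjOn θ S := by
    intro x hx y hy hxy
    by_contra hne
    have hx' : x ∈ S := by exact_mod_cast hx
    have hy' : y ∈ S := by exact_mod_cast hy
    have h1 := (hord x hx' y hy').mp hxy.le
    have h2 := (hord y hy' x hx').mp hxy.ge
    have h3 : cross (x-b) (y-b) = 0 := by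
      have := cross_antisymm (x - b) (y - b)
      linarith
    exact hNC x (hSU x hx') y (hSU y hy') (Ne.symm (hSb x hx')) (Ne.symm (hSb y hy')) hne h3
  have hRsub : R ⊆ S := fun y hy => hRS y hy
  have hBsub : B.erase b ⊆ S := fun y hy => hBS y hy
  -- the counting function
  set F : ℕ → ℤ := fun m => ((R.filter fun y => rnk S θ y ≤ m).card : ℤ)
      - (k : ℤ) * (((B.erase b).filter fun y => rnk S θ y ≤ m).card : ℤ) with hFdef
  have hF0 : F 0 = 0 := by
    have e1 : R.filter (fun y => rnk S θ y ≤ 0) = ∅ :=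
      Finset.filter_false_of_mem (fun y hy => by have := rnk_pos (S := S) (θ := θ) (hRS y hy); omega)
    have e2 : (B.erase b).filter (fun y => rnk S θ y ≤ 0) = ∅ :=
      Finset.filter_false_of_mem (fun y hy => by have := rnk_pos (S := S) (θ := θ) (hBS y hy); omega)
    simp only [hFdef, e1, e2]
    simp
  have hBcard : (B.erase b).card = B.card - 1 := Finset.card_erase_of_mem hb
  have hKZ : (K : ℤ) = (k : ℤ) * ((B.erase b).card : ℤ) := by
    rw [hK, hBcard]
    push_cast
    ring
  have hFn : F S.card = (α : ℤ) := by
    have e1 : R.filter (fun y => rnk S θ y ≤ S.card) = R :=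
      Finset.filter_true_of_mem (fun y hy => rnk_le_card hinj)
    have e2 : (B.erase b).filter (fun y => rnk S θ y ≤ S.card) = B.erase b :=
      Finset.filter_true_of_mem (fun y hy => rnk_le_card hinj)
    simp only [hFdef, e1, e2]
    rw [← hKZ]
    omega
  -- step lemmas
  have hstepR : ∀ m x, x ∈ S → rnk S θ x = m + 1 → x ∈ R → F (m+1) = F m + 1 := by
    intro m x hxS hrx hxR
    have c1 := count_step (C := R) hinj hRsub hxS hrx
    rw [if_pos hxR] at c1
    have hxB : x ∉ B.erase b := fun h =>
      Finset.disjoint_left.mp hdisj hxR (Finset.mem_of_mem_erase h)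
    have c2 := count_step (C := B.erase b) hinj hBsub hxS hrx
    rw [if_neg hxB] at c2
    simp only [hFdef, c1, c2]
    push_cast
    ring
  have hstepB : ∀ m x, x ∈ S → rnk S θ x = m + 1 → x ∈ B.erase b → F (m+1) = F m - k := by
    intro m x hxS hrx hxB
    have hxR : x ∉ R := fun h =>
      Finset.disjoint_left.mp hdisj h (Finset.mem_of_mem_erase hxB)
    have c1 := count_step (C := R) hinj hRsub hxS hrx
    rw [if_neg hxR] at c1
    have c2 := count_step (C := B.erase b) hinj hBsub hxS hrx
    rw [if_pos hxB] at c2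
    simp only [hFdef, c1, c2]
    push_cast
    ring
  have hstep1 : ∀ m, F (m+1) ≤ F m + 1 := by
    intro m
    by_cases h : ∃ x ∈ S, rnk S θ x = m + 1
    · obtain ⟨x, hxS, hrx⟩ := h
      rcases hsplit x hxS with hxR | hxB
      · rw [hstepR m x hxS hrx hxR]
      · rw [hstepB m x hxS hrx hxB]
        linarith
    · push_neg at h
      have c1 := count_none (C := R) hRsub h
      have c2 := count_none (C := B.erase b) hBsub h
      simp only [hFdef, c1, c2]
      linarith
  -- the minimal index j where F hits α
  have hex : ∃ m, F m = (α : ℤ) := ⟨S.card, hFn⟩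
  set j := Nat.find hex with hjdef
  have hj : F j = (α : ℤ) := Nat.find_spec hex
  have hjmin : ∀ m, m < j → F m ≠ (α : ℤ) := fun m hm => Nat.find_min hex hm
  have hjn : j ≤ S.card := Nat.find_le hFn
  have hj1 : 1 ≤ j := by
    rcases Nat.eq_zero_or_pos j with h | h
    · exfalso
      rw [h] at hj
      rw [hF0] at hj
      omega
    · exact h
  have hlt : ∀ m, m < j → F m ≤ (α : ℤ) - 1 := by
    intro m hm
    by_contra hcon
    push_neg at hcon
    have hne := hjmin m hm
    have hgt : (α : ℤ) < F m := by omega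
    obtain ⟨t, _, ht2, ht3⟩ := hit_level F hstep1 (α : ℤ) m 0 (Nat.zero_le m)
      (by rw [hF0]; omega) hgt
    exact hjmin t (ht2.trans hm) ht3
  -- the last zero of F before j
  set m₀ := Nat.findGreatest (fun m => F m = 0) (j - 1) with hm₀def
  have hm₀ : F m₀ = 0 := by
    have h := Nat.findGreatest_spec (P := fun m => F m = 0) (Nat.zero_le (j-1)) hF0
    simpa using h
  have hm₀le : m₀ ≤ j - 1 := Nat.findGreatest_le _
  have hno0 : ∀ t, m₀ < t → t ≤ j → F t ≠ 0 := by
    intro t h1 h2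
    rcases eq_or_lt_of_le h2 with he | hl
    · rw [he, hj]; omega
    · intro hc
      exact Nat.findGreatest_is_greatest (P := fun m => F m = 0) h1 (by omega) hc
  have hpos : ∀ t, m₀ < t → t ≤ j → 1 ≤ F t := by
    intro t h1 h2
    by_contra hcon
    push_neg at hcon
    have hne := hno0 t h1 h2
    have htj : t < j := by
      rcases eq_or_lt_of_le h2 with he | hl
      · exfalso; rw [he, hj] at hcon; omega
      · exact hl
    obtain ⟨t', ht1, ht2, ht3⟩ := hit_level F hstep1 0 j t htj.le (by omega) (by rw [hj]; omega)
    exact hno0 t' (lt_of_lt_of_le h1 ht1) (le_of_lt ht2) ht3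
  -- each rank in (m₀, j] is taken by a red point
  have hred : ∀ t, m₀ < t → t ≤ j → ∃ x, x ∈ R ∧ x ∈ S ∧ rnk S θ x = t ∧ F t = F (t-1) + 1 := by
    intro t h1 h2
    have ht1 : 1 ≤ t := by omega
    obtain ⟨x, hxS, hxr⟩ := rnk_surj hinj ht1 (le_trans h2 hjn)
    have htt : t - 1 + 1 = t := by omega
    rcases hsplit x hxS with hxR | hxB
    · refine ⟨x, hxR, hxS, hxr, ?_⟩
      have hs := hstepR (t-1) x hxS (by rw [htt]; exact hxr) hxR
      rw [htt] at hs
      exact hs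
    · exfalso
      have hs := hstepB (t-1) x hxS (by rw [htt]; exact hxr) hxB
      rw [htt] at hs
      have hFt := hpos t h1 h2
      have hFt1 : F (t-1) ≤ (α : ℤ) - 1 := hlt (t-1) (by omega)
      omega
  have hFat : ∀ s : ℕ, m₀ + s ≤ j → F (m₀ + s) = (s : ℤ) := by
    intro s
    induction s with
    | zero => intro _; simpa using hm₀
    | succ p ih =>
      intro hle
      obtain ⟨x, _, _, _, hstep⟩ := hred (m₀ + p + 1) (by omega) (by omega)
      have he : m₀ + p + 1 - 1 = m₀ + p := by omega
      rw [he] at hstep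
      have := ih (by omega)
      have he2 : m₀ + (p + 1) = m₀ + p + 1 := by omega
      rw [he2, hstep, this]
      push_cast
      ring
  have hαj : m₀ + α = j := by
    have h := hFat (j - m₀) (by omega)
    rw [show m₀ + (j - m₀) = j from by omega] at h
    rw [hj] at h
    omega
  set i := m₀ + 1 with hidef
  have hij : i ≤ j := by omega
  have hFi : F i = 1 := by
    have := hFat 1 (by omega)
    simpa using this
  have hFj1 : F (j-1) = (α : ℤ) - 1 := by
    obtain ⟨x, _, _, _, hstep⟩ := hred j (by omega) le_rfl
    rw [hj] at hstep
    omega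
  obtain ⟨r₁, hr₁R, hr₁S, hr₁rk, -⟩ := hred i (by omega) hij
  obtain ⟨rα, hrαR, hrαS, hrαrk, -⟩ := hred j (by omega) le_rfl
  -- sign facts
  have hbr₁ : b ≠ r₁ := fun h => hbR (h ▸ hr₁R)
  have hbrα : b ≠ rα := fun h => hbR (h ▸ hrαR)
  have hb₁r₁ : b₁ ≠ r₁ := fun h => Finset.disjoint_left.mp hdisj (h ▸ hr₁R) hb₁
  have hb₂rα : b₂ ≠ rα := fun h => Finset.disjoint_left.mp hdisj (h ▸ hrαR) hb₂
  have hr₁U : r₁ ∈ R ∪ B := Finset.mem_union_left B hr₁R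
  have hrαU : rα ∈ R ∪ B := Finset.mem_union_left B hrαR
  have hsb₁ : 0 < sgn3 b r₁ b₁ := by
    have h0 : sgn3 b r₁ b₁ = - cross (b₁ - b) (r₁ - b) := by
      have : sgn3 b r₁ b₁ = cross (r₁ - b) (b₁ - b) := rfl
      rw [this, cross_antisymm]
    have h1 := hA r₁ hr₁U
    have h2 : cross (b₁ - b) (r₁ - b) ≠ 0 :=
      hNC b₁ hb₁U r₁ hr₁U hb₁b.symm hbr₁ hb₁r₁
    rw [h0]
    have : cross (b₁ - b) (r₁ - b) < 0 := lt_of_le_of_ne h1 h2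
    linarith
  have hsb₂ : sgn3 b rα b₂ < 0 := by
    have h0 : sgn3 b rα b₂ = cross (rα - b) (b₂ - b) := rfl
    have h1 := hBv rα hrαU
    have h2 : cross (rα - b) (b₂ - b) ≠ 0 :=
      hNC rα hrαU b₂ hb₂U hbrα hbb₂ (Ne.symm hb₂rα)
    rw [h0]
    exact lt_of_le_of_ne h1 h2
  -- translation between sign conditions and rank comparisons
  have hs₁ : ∀ x : Pt, sgn3 b r₁ x = cross (r₁ - b) (x - b) := fun x => rfl
  have hs₂ : ∀ x : Pt, sgn3 b rα x = cross (rα - b) (x - b) := fun x => rfl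
  have hcv₁a : ∀ x ∈ S, (sgn3 b r₁ x * sgn3 b r₁ b₁ ≤ 0 ↔ i ≤ rnk S θ x) := by
    intro x hx
    rw [hs₁ x, mul_sign1 hsb₁]
    constructor
    · intro h
      have h2 := (hord r₁ hr₁S x hx).mpr h
      have h3 := (rnk_le_iff hr₁S hx).mpr h2
      rw [hr₁rk] at h3
      exact h3
    · intro h
      have h2 : θ r₁ ≤ θ x := (rnk_le_iff hr₁S hx).mp (by rw [hr₁rk]; exact h)
      exact (hord r₁ hr₁S x hx).mp h2
  have hcv₁b : ∀ x ∈ S, (0 ≤ sgn3 b r₁ x * sgn3 b r₁ b₁ ↔ rnk S θ x ≤ i) := by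
    intro x hx
    rw [hs₁ x, mul_sign2 hsb₁]
    have hanti := cross_antisymm (x - b) (r₁ - b)
    constructor
    · intro h
      have hx1 : cross (x - b) (r₁ - b) ≤ 0 := by linarith
      have h2 := (hord x hx r₁ hr₁S).mpr hx1
      have h3 := (rnk_le_iff hx hr₁S).mpr h2
      rw [hr₁rk] at h3
      exact h3
    · intro h
      have h2 : θ x ≤ θ r₁ := (rnk_le_iff hx hr₁S).mp (by rw [hr₁rk]; exact h)
      have h3 := (hord x hx r₁ hr₁S).mp h2
      linarith
  have hcv₂a : ∀ x ∈ S, (sgn3 b rα x * sgn3 b rα b₂ ≤ 0 ↔ rnk S θ x ≤ j) := by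
    intro x hx
    rw [hs₂ x, mul_sign3 hsb₂]
    have hanti := cross_antisymm (x - b) (rα - b)
    constructor
    · intro h
      have hx1 : cross (x - b) (rα - b) ≤ 0 := by linarith
      have h2 := (hord x hx rα hrαS).mpr hx1
      have h3 := (rnk_le_iff hx hrαS).mpr h2
      rw [hrαrk] at h3
      exact h3
    · intro h
      have h2 : θ x ≤ θ rα := (rnk_le_iff hx hrαS).mp (by rw [hrαrk]; exact h)
      have h3 := (hord x hx rα hrαS).mp h2
      linarith
  have hcv₂b : ∀ x ∈ S, (0 ≤ sgn3 b rα x * sgn3 b rα b₂ ↔ j ≤ rnk S θ x) := by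
    intro x hx
    rw [hs₂ x, mul_sign4 hsb₂]
    constructor
    · intro h
      have h2 := (hord rα hrαS x hx).mpr h
      have h3 := (rnk_le_iff hrαS hx).mpr h2
      rw [hrαrk] at h3
      exact h3
    · intro h
      have h2 : θ rα ≤ θ x := (rnk_le_iff hrαS hx).mp (by rw [hrαrk]; exact h)
      exact (hord rα hrαS x hx).mp h2
  -- identification of the wedge
  have hWeq : S.filter (fun x => sgn3 b r₁ x * sgn3 b r₁ b₁ ≤ 0 ∧ sgn3 b rα x * sgn3 b rα b₂ ≤ 0)
      = R.filter (fun x => i ≤ rnk S θ x ∧ rnk S θ x ≤ j) := by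
    ext x
    simp only [Finset.mem_filter]
    constructor
    · rintro ⟨hxS, h1, h2⟩
      have hr1 := (hcv₁a x hxS).mp h1
      have hr2 := (hcv₂a x hxS).mp h2
      obtain ⟨y, hyR, hyS, hyrk, -⟩ := hred (rnk S θ x) (by omega) hr2
      have hyx : y = x := rnk_inj hinj hyS hxS hyrk
      exact ⟨hyx ▸ hyR, hr1, hr2⟩
    · rintro ⟨hxR, h1, h2⟩
      exact ⟨hRS x hxR, (hcv₁a x (hRS x hxR)).mpr h1, (hcv₂a x (hRS x hxR)).mpr h2⟩
  have hcountsplit : ∀ C : Finset Pt,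
      (C.filter fun y => rnk S θ y ≤ m₀).card
        + (C.filter fun x => i ≤ rnk S θ x ∧ rnk S θ x ≤ j).card
        = (C.filter fun y => rnk S θ y ≤ j).card := by
    intro C
    have h := Finset.card_filter_add_card_filter_not
      (s := C.filter fun y => rnk S θ y ≤ j) (p := fun y => rnk S θ y ≤ m₀)
    rw [Finset.filter_filter, Finset.filter_filter] at h
    have e1 : C.filter (fun a => rnk S θ a ≤ j ∧ rnk S θ a ≤ m₀)
        = C.filter (fun y => rnk S θ y ≤ m₀) :=
      Finset.filter_congr (fun y _ => by
        constructor
        · rintro ⟨-, h2⟩; exact h2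
        · intro h2; exact ⟨by omega, h2⟩)
    have e2 : C.filter (fun a => rnk S θ a ≤ j ∧ ¬ rnk S θ a ≤ m₀)
        = C.filter (fun x => i ≤ rnk S θ x ∧ rnk S θ x ≤ j) :=
      Finset.filter_congr (fun y _ => by
        constructor
        · rintro ⟨h1, h2⟩; exact ⟨by omega, h1⟩
        · rintro ⟨h1, h2⟩; exact ⟨h2, by omega⟩)
    rw [e1, e2] at h
    exact h
  have hBmid : (B.erase b).filter (fun x => i ≤ rnk S θ x ∧ rnk S θ x ≤ j) = ∅ := by
    apply Finset.filter_false_of_mem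
    rintro x hxB ⟨h1, h2⟩
    obtain ⟨y, hyR, hyS, hyrk, -⟩ := hred (rnk S θ x) (by omega) h2
    have hyx : y = x := rnk_inj hinj hyS (hBS x hxB) hyrk
    exact Finset.disjoint_left.mp hdisj (hyx ▸ hyR) (Finset.mem_of_mem_erase hxB)
  have hQ3 : (R.filter fun x => i ≤ rnk S θ x ∧ rnk S θ x ≤ j).card = α := by
    have hR3 := hcountsplit R
    have hB3 := hcountsplit (B.erase b)
    rw [hBmid] at hB3
    simp only [Finset.card_empty, add_zero] at hB3
    have hFm₀ : F m₀ = 0 := hm₀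
    have hFj' : F j = (α : ℤ) := hj
    simp only [hFdef] at hFm₀ hFj'
    have hkb : (k:ℤ) * (((B.erase b).filter fun y => rnk S θ y ≤ j).card : ℤ)
        = (k:ℤ) * (((B.erase b).filter fun y => rnk S θ y ≤ m₀).card : ℤ) := by
      rw [hB3]
    have hcast : ((R.filter fun y => rnk S θ y ≤ m₀).card : ℤ)
        + ((R.filter fun x => i ≤ rnk S θ x ∧ rnk S θ x ≤ j).card : ℤ)
        = ((R.filter fun y => rnk S θ y ≤ j).card : ℤ) := by exact_mod_cast hR3
    have hfin : ((R.filter fun x => i ≤ rnk S θ x ∧ rnk S θ x ≤ j).card : ℤ) = (α : ℤ) := by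
      linarith
    exact_mod_cast hfin
  refine ⟨r₁, rα, hr₁R, hrαR, ?_, ?_, ?_, ?_, ?_, ?_⟩
  · exact (hcv₂a r₁ hr₁S).mpr (by rw [hr₁rk]; exact hij)
  · exact (hcv₁a rα hrαS).mpr (by rw [hrαrk]; exact hij)
  · rw [hWeq]
    exact hQ3
  · rw [hWeq]
    exact Finset.filter_subset _ _
  · have e1 : R.filter (fun x => 0 ≤ sgn3 b r₁ x * sgn3 b r₁ b₁)
        = R.filter (fun y => rnk S θ y ≤ i) :=
      Finset.filter_congr (fun x hx => hcv₁b x (hRS x hx))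
    have e2 : (B.erase b).filter (fun x => 0 ≤ sgn3 b r₁ x * sgn3 b r₁ b₁)
        = (B.erase b).filter (fun y => rnk S θ y ≤ i) :=
      Finset.filter_congr (fun x hx => hcv₁b x (hBS x hx))
    rw [e1, e2]
    have hFi' := hFi
    simp only [hFdef] at hFi'
    have hfin : ((R.filter fun y => rnk S θ y ≤ i).card : ℤ)
        = (k:ℤ) * (((B.erase b).filter fun y => rnk S θ y ≤ i).card : ℤ) + 1 := by
      linarith
    exact_mod_cast hfin
  · have e1 : R.filter (fun x => 0 ≤ sgn3 b rα x * sgn3 b rα b₂)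
        = R.filter (fun y => ¬ rnk S θ y ≤ j - 1) :=
      Finset.filter_congr (fun x hx => by
        rw [hcv₂b x (hRS x hx)]
        omega)
    have e2 : (B.erase b).filter (fun x => 0 ≤ sgn3 b rα x * sgn3 b rα b₂)
        = (B.erase b).filter (fun y => ¬ rnk S θ y ≤ j - 1) :=
      Finset.filter_congr (fun x hx => by
        rw [hcv₂b x (hBS x hx)]
        omega)
    rw [e1, e2]
    have hsR := Finset.card_filter_add_card_filter_not
      (s := R) (p := fun y => rnk S θ y ≤ j - 1)
    have hsB := Finset.card_filter_add_card_filter_not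
      (s := B.erase b) (p := fun y => rnk S θ y ≤ j - 1)
    have hFj1' := hFj1
    simp only [hFdef] at hFj1'
    have hsRZ : ((R.filter fun y => rnk S θ y ≤ j - 1).card : ℤ)
        + ((R.filter fun y => ¬ rnk S θ y ≤ j - 1).card : ℤ) = (R.card : ℤ) := by
      exact_mod_cast hsR
    have hsBZ : (((B.erase b).filter fun y => rnk S θ y ≤ j - 1).card : ℤ)
        + (((B.erase b).filter fun y => ¬ rnk S θ y ≤ j - 1).card : ℤ)
        = ((B.erase b).card : ℤ) := by
      exact_mod_cast hsB
    have htot : (R.card : ℤ) = (k : ℤ) * ((B.erase b).card : ℤ) + (α : ℤ) := by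
      rw [← hKZ]
      omega
    have hmulB : (k:ℤ) * (((B.erase b).filter fun y => rnk S θ y ≤ j - 1).card : ℤ)
        + (k:ℤ) * (((B.erase b).filter fun y => ¬ rnk S θ y ≤ j - 1).card : ℤ)
        = (k:ℤ) * ((B.erase b).card : ℤ) := by
      rw [← mul_add, hsBZ]
    have hfin : ((R.filter fun y => ¬ rnk S θ y ≤ j - 1).card : ℤ)
        = (k:ℤ) * (((B.erase b).filter fun y => ¬ rnk S θ y ≤ j - 1).card : ℤ) + 1 := by
      linarith
    exact_mod_cast hfin
end
end

section
/- Let R and B be disjoint finite sets of red and blue points in the plane with R ∪ B in general position, |B| ≥ 1, and |R| = k|B| + 1 for an integer k ≥ 2. Suppose r₁, r, r₂ are red points that are consecutive in counter-clockwise order among the vertices of the convex hull of R ∪ B. Then at least one of the following holds. (1) There exist a blue point b ∈ B and an integer α with 0 < α < k such that |R₁| = k(|B₁|−1) + k − α and |R₂| = k(|B₂|−1) + α, where R₁ (resp. B₁) is the set of points of R − {r} (resp. B) lying on the line ℓ(r, b) or strictly on the side of ℓ(r, b) containing r₁, and R₂ (resp. B₂) is the set of points of R − {r} (resp. B) lying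 on ℓ(r, b) or strictly on the side of ℓ(r, b) containing r₂. (2) There exist blue points b, b' ∈ B that are consecutive in the radial ordering of (R ∪ B) − {r} around r (i.e., no point of (R ∪ B) − {r} lies strictly inside the angular wedge at r between the rays from r through b and through b'), with b preceding b' in the clockwise radial order starting at r₁, such that |R₁| = k|B₁| and |R₂| = k|B₂|, where R₁ (resp. B₁) is the set of points of R − {r} (resp. B) lying on ℓ(r, b) or strictly on the side of ℓ(r, b) containing r₁, and R₂ (resp. B₂) is the set of points of R − {r} (resp. B) lying on ℓ(r, b') or strictly on the side of ℓ(r, b') containing r₂. -/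
open scoped Classical

noncomputable section

lemma sgn3_cyclic (p q x : Pt) : sgn3 p q x = sgn3 q x p := by
  simp only [sgn3, cross, Prod.fst_sub, Prod.snd_sub]; ring
lemma sgn3_swap12 (p q x : Pt) : sgn3 q p x = - sgn3 p q x := by
  simp only [sgn3, cross, Prod.fst_sub, Prod.snd_sub]; ring
lemma sgn3_swap23 (p q x : Pt) : sgn3 p x q = - sgn3 p q x := by
  simp only [sgn3, cross, Prod.fst_sub, Prod.snd_sub]; ring
lemma sgn3_self2 (p q : Pt) : sgn3 p q q = 0 := by
  simp only [sgn3, cross, Prod.fst_sub, Prod.snd_sub]; ring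
lemma sgn3_self1 (p q : Pt) : sgn3 p q p = 0 := by
  simp only [sgn3, cross, Prod.fst_sub, Prod.snd_sub]; ring
lemma sgn3_key (r a c b x : Pt) :
    sgn3 r c a * sgn3 r b x = sgn3 a r b * sgn3 r c x - sgn3 r c b * sgn3 a r x := by
  simp only [sgn3, cross, Prod.fst_sub, Prod.snd_sub]; ring

lemma collinear_of_sgn3_eq_zero {p q x : Pt} (h : sgn3 p q x = 0) :
    Collinear ℝ ({p, q, x} : Set Pt) := by
  rcases eq_or_ne p q with rfl | hpq
  · have : ({p, p, x} : Set Pt) = {p, x} := by simp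
    rw [this]; exact collinear_pair ℝ p x
  · rw [collinear_iff_of_mem (Set.mem_insert p {q, x})]
    refine ⟨q - p, ?_⟩
    intro y hy
    have h' : (q.1 - p.1) * (x.2 - p.2) = (q.2 - p.2) * (x.1 - p.1) := by
      simp only [sgn3, cross, Prod.fst_sub, Prod.snd_sub] at h
      linarith
    rcases hy with rfl | rfl | rfl
    · exact ⟨0, by simp⟩
    · exact ⟨1, by simp⟩
    · rcases eq_or_ne (q.1 - p.1) 0 with h1 | h1
      · have h2 : q.2 - p.2 ≠ 0 := by
          intro h2; apply hpq; ext <;> linarith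
        refine ⟨(y.2 - p.2) / (q.2 - p.2), ?_⟩
        have hx1 : y.1 - p.1 = 0 := by
          rcases mul_eq_zero.mp
            (by rw [h1] at h'; linarith [h'] : (q.2 - p.2) * (y.1 - p.1) = 0) with h3 | h3
          · exact absurd h3 h2
          · exact h3
        ext
        · show y.1 = (y.2 - p.2) / (q.2 - p.2) * (q - p).1 + p.1
          rw [Prod.fst_sub, h1]; simp; linarith
        · show y.2 = (y.2 - p.2) / (q.2 - p.2) * (q - p).2 + p.2
          rw [Prod.snd_sub]; field_simp; ring
      · refine ⟨(y.1 - p.1) / (q.1 - p.1), ?_⟩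
        ext
        · show y.1 = (y.1 - p.1) / (q.1 - p.1) * (q - p).1 + p.1
          rw [Prod.fst_sub]; field_simp; ring
        · show y.2 = (y.1 - p.1) / (q.1 - p.1) * (q - p).2 + p.2
          rw [Prod.snd_sub]; field_simp; nlinarith [h']

set_option maxHeartbeats 2000000 in
/-- Lemma on three consecutive red hull points.
Let `|R| = k|B| + 1`, `k ≥ 2`, `|B| ≥ 1`, and let `r₁, r, r₂` be red points
consecutive in counter-clockwise order on the convex hull of `R ∪ B`. Then either:
(1) there is a blue point `b` and `0 < α < k` with `|R₁| = k(|B₁|-1) + k - α` and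
`|R₂| = k(|B₂|-1) + α`, where `R₁, B₁` (resp. `R₂, B₂`) are the points of `R \ {r}`
(resp. `B`) on the line `ℓ(r,b)` or strictly on its side containing `r₁` (resp. `r₂`);
or (2) there are distinct blue points `b, b'`, consecutive in the radial ordering
around `r` (no point of `(R ∪ B) \ {r}` lies strictly inside the angular wedge at `r`
between the rays `r→b` and `r→b'`), with `b` preceding `b'` clockwise from `r₁`, such
that `|R₁| = k|B₁|` and `|R₂| = k|B₂|`, where `R₁, B₁` are the points of `R \ {r}`,
`B` on `ℓ(r,b)` or strictly on its `r₁`-side and `R₂, B₂` those on `ℓ(r,b')` or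
strictly on its `r₂`-side. -/
theorem statement_13 (R B : Finset Pt) (hdisj : Disjoint R B)
    (hgp : GenPos (↑(R ∪ B) : Set Pt)) (k : ℕ) (hk : 2 ≤ k) (hB : 1 ≤ B.card)
    (hcard : R.card = k * B.card + 1)
    (r₁ r r₂ : Pt) (hr₁ : r₁ ∈ R) (hr : r ∈ R) (hr₂ : r₂ ∈ R)
    (hedge₁ : IsCCWHullEdge (↑(R ∪ B) : Set Pt) r₁ r)
    (hedge₂ : IsCCWHullEdge (↑(R ∪ B) : Set Pt) r r₂) :
    (∃ b ∈ B, ∃ α : ℕ, 0 < α ∧ α < k ∧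
      (((R.erase r).filter (fun x => 0 ≤ sgn3 r b x * sgn3 r b r₁)).card : ℤ)
        = k * (((B.filter (fun x => 0 ≤ sgn3 r b x * sgn3 r b r₁)).card : ℤ) - 1)
            + k - α ∧
      (((R.erase r).filter (fun x => 0 ≤ sgn3 r b x * sgn3 r b r₂)).card : ℤ)
        = k * (((B.filter (fun x => 0 ≤ sgn3 r b x * sgn3 r b r₂)).card : ℤ) - 1)
            + α) ∨
    (∃ b ∈ B, ∃ b' ∈ B, b ≠ b' ∧
      -- `b` weakly precedes `b'` in the clockwise radial order around `r` from `r₁`: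
      sgn3 r b b' * sgn3 r b r₁ ≤ 0 ∧
      sgn3 r b' b * sgn3 r b' r₂ ≤ 0 ∧
      -- `b` and `b'` are radially consecutive around `r`:
      (∀ x ∈ R ∪ B, x ≠ r →
        ¬ (sgn3 r b x * sgn3 r b r₁ < 0 ∧ sgn3 r b' x * sgn3 r b' r₂ < 0)) ∧
      ((R.erase r).filter (fun x => 0 ≤ sgn3 r b x * sgn3 r b r₁)).card
        = k * (B.filter (fun x => 0 ≤ sgn3 r b x * sgn3 r b r₁)).card ∧
      ((R.erase r).filter (fun x => 0 ≤ sgn3 r b' x * sgn3 r b' r₂)).card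
        = k * (B.filter (fun x => 0 ≤ sgn3 r b' x * sgn3 r b' r₂)).card) := by
  classical
  obtain ⟨-, -, hner₁, hL₁⟩ := hedge₁
  obtain ⟨-, -, hner₂, hL₂⟩ := hedge₂
  have hrU : r ∈ R ∪ B := Finset.mem_union_left _ hr
  have hr₁U : r₁ ∈ R ∪ B := Finset.mem_union_left _ hr₁
  have hr₂U : r₂ ∈ R ∪ B := Finset.mem_union_left _ hr₂
  have hL₁' : ∀ x ∈ R ∪ B, 0 ≤ sgn3 r₁ r x := fun x hx => hL₁ x (by simpa using hx)
  have hL₂' : ∀ x ∈ R ∪ B, 0 ≤ sgn3 r r₂ x := fun x hx => hL₂ x (by simpa using hx)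
  have hsgn : ∀ p ∈ R ∪ B, ∀ q ∈ R ∪ B, ∀ x ∈ R ∪ B, p ≠ q → p ≠ x → q ≠ x →
      sgn3 p q x ≠ 0 := by
    intro p hp q hq x hx h1 h2 h3 h0
    exact hgp p (by simpa using hp) q (by simpa using hq) x (by simpa using hx)
      h1 h2 h3 (collinear_of_sgn3_eq_zero h0)
  have hRB : ∀ {x : Pt}, x ∈ R → x ∈ B → False :=
    fun hx hb => Finset.disjoint_left.mp hdisj hx hb
  have hbneq : ∀ b ∈ B, b ≠ r ∧ b ≠ r₁ ∧ b ≠ r₂ := by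
    intro b hb
    exact ⟨fun h => hRB (by rw [h]; exact hr) hb, fun h => hRB (by rw [h]; exact hr₁) hb,
      fun h => hRB (by rw [h]; exact hr₂) hb⟩
  have hBU : ∀ b ∈ B, b ∈ R ∪ B := fun b hb => Finset.mem_union_right _ hb
  have hr₁₂ : r₁ ≠ r₂ := by
    intro h
    obtain ⟨b0, hb0⟩ := Finset.card_pos.mp (by omega : 0 < B.card)
    obtain ⟨hbr, hbr₁, -⟩ := hbneq b0 hb0
    have h1 := hL₁' b0 (hBU b0 hb0)
    have h2 := hL₂' b0 (hBU b0 hb0)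
    rw [← h, sgn3_swap12] at h2
    exact hsgn r₁ hr₁U r hrU b0 (hBU b0 hb0) hner₁ (Ne.symm hbr₁) (Ne.symm hbr)
      (le_antisymm (by linarith) h1)
  have hK : 0 < sgn3 r r₂ r₁ :=
    lt_of_le_of_ne (hL₂' r₁ hr₁U)
      (Ne.symm (hsgn r hrU r₂ hr₂U r₁ hr₁U hner₂ (Ne.symm hner₁) (Ne.symm hr₁₂)))
  have hkey : ∀ b x : Pt, sgn3 r r₂ r₁ * sgn3 r b x
      = sgn3 r₁ r b * sgn3 r r₂ x - sgn3 r r₂ b * sgn3 r₁ r x :=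
    fun b x => sgn3_key r r₁ r₂ b x
  have hsr₁ : ∀ b : Pt, sgn3 r b r₁ = sgn3 r₁ r b := by
    intro b
    have h := hkey b r₁
    rw [sgn3_self1 r₁ r, mul_zero, sub_zero] at h
    exact mul_left_cancel₀ (ne_of_gt hK) (by rw [h]; ring)
  have hsr₂ : ∀ b : Pt, sgn3 r b r₂ = - sgn3 r r₂ b := by
    intro b
    have h := hkey b r₂
    rw [sgn3_self2 r r₂, mul_zero, zero_sub, sgn3_cyclic r₁ r r₂] at h
    exact mul_left_cancel₀ (ne_of_gt hK) (by rw [h]; ring)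
  have hmuB : ∀ b ∈ B, 0 < sgn3 r₁ r b := by
    intro b hb
    obtain ⟨hbr, hbr₁, -⟩ := hbneq b hb
    exact lt_of_le_of_ne (hL₁' b (hBU b hb))
      (Ne.symm (hsgn r₁ hr₁U r hrU b (hBU b hb) hner₁ (Ne.symm hbr₁) (Ne.symm hbr)))
  have hlamB : ∀ b ∈ B, 0 < sgn3 r r₂ b := by
    intro b hb
    obtain ⟨hbr, -, hbr₂⟩ := hbneq b hb
    exact lt_of_le_of_ne (hL₂' b (hBU b hb))
      (Ne.symm (hsgn r hrU r₂ hr₂U b (hBU b hb) hner₂ (Ne.symm hbr) (Ne.symm hbr₂)))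
  have hsb : ∀ b ∈ B, ∀ x ∈ R ∪ B, x ≠ r → x ≠ b → sgn3 r b x ≠ 0 := by
    intro b hb x hx h1 h2
    exact hsgn r hrU b (hBU b hb) x hx (Ne.symm (hbneq b hb).1) (Ne.symm h1) (Ne.symm h2)
  have htrans : ∀ b ∈ B, ∀ b' ∈ B, 0 ≤ sgn3 r b' b →
      ∀ x ∈ R ∪ B, 0 ≤ sgn3 r b x → 0 ≤ sgn3 r b' x := by
    intro b hb b' hb' hbb' x hx hbx
    have h1 : 0 ≤ sgn3 r₁ r b * sgn3 r r₂ x - sgn3 r r₂ b * sgn3 r₁ r x := by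
      rw [← hkey b x]; exact mul_nonneg hK.le hbx
    have h2 : 0 ≤ sgn3 r₁ r b' * sgn3 r r₂ b - sgn3 r r₂ b' * sgn3 r₁ r b := by
      rw [← hkey b' b]; exact mul_nonneg hK.le hbb'
    have hx1 : 0 ≤ sgn3 r r₂ x := hL₂' x hx
    have hb'1 : 0 ≤ sgn3 r r₂ b' := (hlamB b' hb').le
    have h3 : 0 ≤ sgn3 r r₂ b *
        (sgn3 r₁ r b' * sgn3 r r₂ x - sgn3 r r₂ b' * sgn3 r₁ r x) := by
      have e : sgn3 r r₂ b * (sgn3 r₁ r b' * sgn3 r r₂ x - sgn3 r r₂ b' * sgn3 r₁ r x)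
          = sgn3 r r₂ b' * (sgn3 r₁ r b * sgn3 r r₂ x - sgn3 r r₂ b * sgn3 r₁ r x)
            + sgn3 r r₂ x * (sgn3 r₁ r b' * sgn3 r r₂ b - sgn3 r r₂ b' * sgn3 r₁ r b) := by
        ring
      rw [e]
      exact add_nonneg (mul_nonneg hb'1 h1) (mul_nonneg hx1 h2)
    have h4 := (mul_nonneg_iff_of_pos_left (hlamB b hb)).mp h3
    exact (mul_nonneg_iff_of_pos_left hK).mp (by rw [hkey b' x]; exact h4)
  have hconv₁ : ∀ b ∈ B, ∀ s : Finset Pt,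
      s.filter (fun x => 0 ≤ sgn3 r b x * sgn3 r b r₁)
        = s.filter (fun x => 0 ≤ sgn3 r b x) := by
    intro b hb s
    apply Finset.filter_congr
    intro x _
    rw [hsr₁ b]
    exact mul_nonneg_iff_of_pos_right (hmuB b hb)
  have hconv₂ : ∀ b ∈ B, ∀ s : Finset Pt,
      s.filter (fun x => 0 ≤ sgn3 r b x * sgn3 r b r₂)
        = s.filter (fun x => sgn3 r b x ≤ 0) := by
    intro b hb s
    apply Finset.filter_congr
    intro x _
    rw [hsr₂ b]
    have hl := hlamB b hb
    constructor
    · intro h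
      by_contra hc
      push_neg at hc
      nlinarith [mul_pos hc hl]
    · intro h
      nlinarith [mul_nonneg (neg_nonneg.mpr h) hl.le]
  have hm : (R.erase r).card = k * B.card := by
    rw [Finset.card_erase_of_mem hr]; omega
  have hRpart : ∀ b ∈ B,
      ((R.erase r).filter (fun x => 0 ≤ sgn3 r b x)).card
        + ((R.erase r).filter (fun x => sgn3 r b x ≤ 0)).card = k * B.card := by
    intro b hb
    have h0 : ∀ x ∈ R.erase r, sgn3 r b x ≠ 0 := by
      intro x hx
      obtain ⟨hxr, hxR⟩ := Finset.mem_erase.mp hx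
      exact hsb b hb x (Finset.mem_union_left _ hxR) hxr (fun h => hRB (by rw [← h]; exact hxR) hb)
    have he : (R.erase r).filter (fun x => sgn3 r b x ≤ 0)
        = (R.erase r).filter (fun x => ¬ 0 ≤ sgn3 r b x) := by
      apply Finset.filter_congr
      intro x hx
      rw [not_le]
      exact ⟨fun h => lt_of_le_of_ne h (h0 x hx), le_of_lt⟩
    rw [he, ← hm, Finset.card_filter_add_card_filter_not]
  have hBsplit : ∀ b ∈ B, ∀ p : Pt → Prop, p b →
      (B.filter p).card = ((B.erase b).filter p).card + 1 := by
    intro b hb p hp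
    conv_lhs => rw [← Finset.insert_erase hb]
    rw [Finset.filter_insert, if_pos hp, Finset.card_insert_of_notMem]
    intro h
    exact (Finset.mem_erase.mp (Finset.mem_of_mem_filter b h)).1 rfl
  have hBpart : ∀ b ∈ B,
      (B.filter (fun x => 0 ≤ sgn3 r b x)).card
        + (B.filter (fun x => sgn3 r b x ≤ 0)).card = B.card + 1 := by
    intro b hb
    rw [hBsplit b hb _ (by rw [sgn3_self2]), hBsplit b hb _ (by rw [sgn3_self2])]
    have h0 : ∀ x ∈ B.erase b, sgn3 r b x ≠ 0 := by
      intro x hx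
      obtain ⟨hxb, hxB⟩ := Finset.mem_erase.mp hx
      exact hsb b hb x (hBU x hxB) (hbneq x hxB).1 hxb
    have he : (B.erase b).filter (fun x => sgn3 r b x ≤ 0)
        = (B.erase b).filter (fun x => ¬ 0 ≤ sgn3 r b x) := by
      apply Finset.filter_congr
      intro x hx
      rw [not_le]
      exact ⟨fun h => lt_of_le_of_ne h (h0 x hx), le_of_lt⟩
    rw [he]
    have h1 := Finset.card_filter_add_card_filter_not
      (s := B.erase b) (fun x => 0 ≤ sgn3 r b x)
    rw [Finset.card_erase_of_mem hb] at h1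
    omega
  have hBAsub : ∀ b ∈ B, ∀ b' ∈ B, 0 ≤ sgn3 r b' b →
      B.filter (fun x => 0 ≤ sgn3 r b x) ⊆ B.filter (fun x => 0 ≤ sgn3 r b' x) := by
    intro b hb b' hb' h x hx
    obtain ⟨hxB, hxs⟩ := Finset.mem_filter.mp hx
    exact Finset.mem_filter.mpr ⟨hxB, htrans b hb b' hb' h x (hBU x hxB) hxs⟩
  have hlt : ∀ b ∈ B, ∀ c ∈ B, c ≠ b → 0 ≤ sgn3 r b c →
      (B.filter (fun x => 0 ≤ sgn3 r c x)).card
        < (B.filter (fun x => 0 ≤ sgn3 r b x)).card := by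
    intro b hb c hc hne hle
    have hsub := hBAsub c hc b hb hle
    have hbnot : b ∉ B.filter (fun x => 0 ≤ sgn3 r c x) := by
      intro h
      have h1 := (Finset.mem_filter.mp h).2
      rw [sgn3_swap23 r b c] at h1
      have h3 : sgn3 r b c ≠ 0 := hsb b hb c (hBU c hc) (hbneq c hc).1 hne
      have h4 : 0 < sgn3 r b c := lt_of_le_of_ne hle (Ne.symm h3)
      linarith
    have hbin : b ∈ B.filter (fun x => 0 ≤ sgn3 r b x) :=
      Finset.mem_filter.mpr ⟨hb, by rw [sgn3_self2]⟩
    exact Finset.card_lt_card ((Finset.ssubset_iff_of_subset hsub).mpr ⟨b, hbin, hbnot⟩)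
  -- the "case 1" constructor
  have case1 : ∀ c ∈ B,
      ((R.erase r).filter (fun x => 0 ≤ sgn3 r c x)).card
        < k * (B.filter (fun x => 0 ≤ sgn3 r c x)).card →
      k * (B.filter (fun x => 0 ≤ sgn3 r c x)).card
        < ((R.erase r).filter (fun x => 0 ≤ sgn3 r c x)).card + k →
      (∃ b ∈ B, ∃ α : ℕ, 0 < α ∧ α < k ∧
        (((R.erase r).filter (fun x => 0 ≤ sgn3 r b x * sgn3 r b r₁)).card : ℤ)
          = k * (((B.filter (fun x => 0 ≤ sgn3 r b x * sgn3 r b r₁)).card : ℤ) - 1)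
              + k - α ∧
        (((R.erase r).filter (fun x => 0 ≤ sgn3 r b x * sgn3 r b r₂)).card : ℤ)
          = k * (((B.filter (fun x => 0 ≤ sgn3 r b x * sgn3 r b r₂)).card : ℤ) - 1)
              + α) := by
    intro c hc hlt1 hlt2
    refine ⟨c, hc, k * (B.filter (fun x => 0 ≤ sgn3 r c x)).card
      - ((R.erase r).filter (fun x => 0 ≤ sgn3 r c x)).card, ?_, ?_, ?_, ?_⟩
    · exact Nat.sub_pos_of_lt hlt1
    · exact (Nat.sub_lt_iff_lt_add hlt1.le).mpr (by omega)
    · rw [hconv₁ c hc (R.erase r), hconv₁ c hc B]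
      have e : ((k * (B.filter (fun x => 0 ≤ sgn3 r c x)).card
          - ((R.erase r).filter (fun x => 0 ≤ sgn3 r c x)).card : ℕ) : ℤ)
          = (k : ℤ) * ((B.filter (fun x => 0 ≤ sgn3 r c x)).card : ℤ)
            - (((R.erase r).filter (fun x => 0 ≤ sgn3 r c x)).card : ℤ) := by
        rw [Nat.cast_sub hlt1.le]; push_cast; ring
      rw [e]; ring
    · rw [hconv₂ c hc (R.erase r), hconv₂ c hc B]
      have e : ((k * (B.filter (fun x => 0 ≤ sgn3 r c x)).card
          - ((R.erase r).filter (fun x => 0 ≤ sgn3 r c x)).card : ℕ) : ℤ)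
          = (k : ℤ) * ((B.filter (fun x => 0 ≤ sgn3 r c x)).card : ℤ)
            - (((R.erase r).filter (fun x => 0 ≤ sgn3 r c x)).card : ℤ) := by
        rw [Nat.cast_sub hlt1.le]; push_cast; ring
      rw [e]
      have h1 := hRpart c hc
      have h2 := hBpart c hc
      have e1 : (((R.erase r).filter (fun x => sgn3 r c x ≤ 0)).card : ℤ)
          = (k : ℤ) * (B.card : ℤ)
            - (((R.erase r).filter (fun x => 0 ≤ sgn3 r c x)).card : ℤ) := by
        have := congrArg (Nat.cast : ℕ → ℤ) h1
        push_cast at this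
        linarith
      have e2 : ((B.filter (fun x => sgn3 r c x ≤ 0)).card : ℤ)
          = (B.card : ℤ) + 1 - ((B.filter (fun x => 0 ≤ sgn3 r c x)).card : ℤ) := by
        have := congrArg (Nat.cast : ℕ → ℤ) h2
        push_cast at this
        linarith
      rw [e1, e2]; ring
  by_cases hS : ∃ b ∈ B, k * (B.filter (fun x => 0 ≤ sgn3 r b x)).card
      ≤ ((R.erase r).filter (fun x => 0 ≤ sgn3 r b x)).card
  · -- Case B
    obtain ⟨b₀, hb₀, hFb₀⟩ := hS
    obtain ⟨b, hbS, hmax⟩ := Finset.exists_max_image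
      (B.filter (fun b => k * (B.filter (fun x => 0 ≤ sgn3 r b x)).card
        ≤ ((R.erase r).filter (fun x => 0 ≤ sgn3 r b x)).card))
      (fun b => (B.filter (fun x => 0 ≤ sgn3 r b x)).card)
      ⟨b₀, Finset.mem_filter.mpr ⟨hb₀, hFb₀⟩⟩
    obtain ⟨hb, hFb⟩ := Finset.mem_filter.mp hbS
    have hρlt : ((R.erase r).filter (fun x => 0 ≤ sgn3 r b x)).card < k * B.card := by
      rw [← hm]
      apply Finset.card_lt_card
      rw [Finset.ssubset_iff_of_subset (Finset.filter_subset _ _)]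
      refine ⟨r₂, Finset.mem_erase.mpr ⟨Ne.symm hner₂, hr₂⟩, ?_⟩
      intro h
      have h1 := (Finset.mem_filter.mp h).2
      rw [hsr₂ b] at h1
      linarith [hlamB b hb]
    have hβlt : (B.filter (fun x => 0 ≤ sgn3 r b x)).card < B.card := by
      by_contra hc
      push_neg at hc
      have h1 : k * B.card ≤ k * (B.filter (fun x => 0 ≤ sgn3 r b x)).card :=
        Nat.mul_le_mul_left k hc
      exact lt_irrefl _ (lt_of_le_of_lt (le_trans h1 hFb) hρlt)
    have hT : ∃ c ∈ B, ¬ 0 ≤ sgn3 r b c := by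
      by_contra hc
      push_neg at hc
      have hsub : B ⊆ B.filter (fun x => 0 ≤ sgn3 r b x) :=
        fun x hx => Finset.mem_filter.mpr ⟨hx, hc x hx⟩
      exact absurd (Finset.card_le_card hsub) (not_le.mpr hβlt)
    obtain ⟨b'', hb''B, hb''n⟩ := hT
    obtain ⟨b', hb'T, hmin'⟩ := Finset.exists_min_image
      (B.filter (fun c => ¬ 0 ≤ sgn3 r b c))
      (fun c => (B.filter (fun x => 0 ≤ sgn3 r c x)).card)
      ⟨b'', Finset.mem_filter.mpr ⟨hb''B, hb''n⟩⟩
    obtain ⟨hb'B, hb'nle⟩ := Finset.mem_filter.mp hb'T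
    have hbb'ne : b ≠ b' := by
      intro h; apply hb'nle; rw [← h, sgn3_self2]
    have hbb'neg : sgn3 r b b' < 0 := not_le.mp hb'nle
    have hb'b : 0 < sgn3 r b' b := by
      rw [sgn3_swap23 r b b']; linarith
    have hBA' : B.filter (fun x => 0 ≤ sgn3 r b' x)
        = insert b' (B.filter (fun x => 0 ≤ sgn3 r b x)) := by
      apply Finset.Subset.antisymm
      · intro x hx
        obtain ⟨hxB, hxs⟩ := Finset.mem_filter.mp hx
        by_cases hxb' : x = b'
        · exact Finset.mem_insert.mpr (Or.inl hxb')
        · refine Finset.mem_insert.mpr (Or.inr ?_)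
          by_contra hxnot
          have hxT : x ∈ B.filter (fun c => ¬ 0 ≤ sgn3 r b c) := by
            refine Finset.mem_filter.mpr ⟨hxB, ?_⟩
            intro h; exact hxnot (Finset.mem_filter.mpr ⟨hxB, h⟩)
          exact absurd (hmin' x hxT) (not_le.mpr (hlt b' hb'B x hxB hxb' hxs))
      · intro x hx
        rcases Finset.mem_insert.mp hx with rfl | hx
        · exact Finset.mem_filter.mpr ⟨hb'B, by rw [sgn3_self2]⟩
        · obtain ⟨hxB, hxs⟩ := Finset.mem_filter.mp hx
          exact Finset.mem_filter.mpr ⟨hxB, htrans b hb b' hb'B hb'b.le x (hBU x hxB) hxs⟩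
    have hb'notin : b' ∉ B.filter (fun x => 0 ≤ sgn3 r b x) :=
      fun h => hb'nle (Finset.mem_filter.mp h).2
    have hβ' : (B.filter (fun x => 0 ≤ sgn3 r b' x)).card
        = (B.filter (fun x => 0 ≤ sgn3 r b x)).card + 1 := by
      rw [hBA', Finset.card_insert_of_notMem hb'notin]
    have hRsub' : (R.erase r).filter (fun x => 0 ≤ sgn3 r b x)
        ⊆ (R.erase r).filter (fun x => 0 ≤ sgn3 r b' x) := by
      intro x hx
      obtain ⟨hx1, hx2⟩ := Finset.mem_filter.mp hx
      exact Finset.mem_filter.mpr ⟨hx1, htrans b hb b' hb'B hb'b.le x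
        (Finset.mem_union_left _ (Finset.mem_erase.mp hx1).2) hx2⟩
    have hρle : ((R.erase r).filter (fun x => 0 ≤ sgn3 r b x)).card
        ≤ ((R.erase r).filter (fun x => 0 ≤ sgn3 r b' x)).card :=
      Finset.card_le_card hRsub'
    have hFb' : ((R.erase r).filter (fun x => 0 ≤ sgn3 r b' x)).card
        < k * (B.filter (fun x => 0 ≤ sgn3 r b' x)).card := by
      by_contra hc
      push_neg at hc
      have hb'S : b' ∈ B.filter (fun c => k * (B.filter (fun x => 0 ≤ sgn3 r c x)).card
          ≤ ((R.erase r).filter (fun x => 0 ≤ sgn3 r c x)).card) :=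
        Finset.mem_filter.mpr ⟨hb'B, hc⟩
      have := hmax b' hb'S
      omega
    by_cases hdeep : k * (B.filter (fun x => 0 ≤ sgn3 r b' x)).card
        < ((R.erase r).filter (fun x => 0 ≤ sgn3 r b' x)).card + k
    · exact Or.inl (case1 b' hb'B hFb' hdeep)
    · push_neg at hdeep
      -- deep case : F b = 0, F b' = -k, RA b = RA b'
      have hmul : k * (B.filter (fun x => 0 ≤ sgn3 r b' x)).card
          = k * (B.filter (fun x => 0 ≤ sgn3 r b x)).card + k := by
        rw [hβ', Nat.mul_succ]
      have hFbeq : k * (B.filter (fun x => 0 ≤ sgn3 r b x)).card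
          = ((R.erase r).filter (fun x => 0 ≤ sgn3 r b x)).card := by
        linarith
      have hρρ' : ((R.erase r).filter (fun x => 0 ≤ sgn3 r b' x)).card
          = ((R.erase r).filter (fun x => 0 ≤ sgn3 r b x)).card := by
        linarith
      have hF'eq : ((R.erase r).filter (fun x => 0 ≤ sgn3 r b' x)).card + k
          = k * (B.filter (fun x => 0 ≤ sgn3 r b' x)).card := by
        linarith
      have hRAeq : (R.erase r).filter (fun x => 0 ≤ sgn3 r b x)
          = (R.erase r).filter (fun x => 0 ≤ sgn3 r b' x) :=
        Finset.eq_of_subset_of_card_le hRsub' (le_of_eq hρρ')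
      refine Or.inr ⟨b, hb, b', hb'B, hbb'ne, ?_, ?_, ?_, ?_, ?_⟩
      · rw [hsr₁ b]
        exact mul_nonpos_of_nonpos_of_nonneg hbb'neg.le (hmuB b hb).le
      · rw [hsr₂ b']
        nlinarith [mul_pos hb'b (hlamB b' hb'B)]
      · rintro x hxU hxr ⟨hx1, hx2⟩
        rw [hsr₁ b] at hx1
        have hbx : sgn3 r b x < 0 := by
          by_contra hcc
          push_neg at hcc
          nlinarith [mul_nonneg hcc (hmuB b hb).le]
        rw [hsr₂ b'] at hx2
        have hb'x : 0 < sgn3 r b' x := by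
          by_contra hcc
          push_neg at hcc
          nlinarith [mul_nonneg (neg_nonneg.mpr hcc) (hlamB b' hb'B).le]
        rcases Finset.mem_union.mp hxU with hxR | hxB
        · have hxin : x ∈ (R.erase r).filter (fun y => 0 ≤ sgn3 r b' y) :=
            Finset.mem_filter.mpr ⟨Finset.mem_erase.mpr ⟨hxr, hxR⟩, hb'x.le⟩
          rw [← hRAeq] at hxin
          exact absurd (Finset.mem_filter.mp hxin).2 (not_le.mpr hbx)
        · have hxin : x ∈ B.filter (fun y => 0 ≤ sgn3 r b' y) :=
            Finset.mem_filter.mpr ⟨hxB, hb'x.le⟩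
          rw [hBA'] at hxin
          rcases Finset.mem_insert.mp hxin with rfl | hxin
          · rw [sgn3_self2] at hb'x
            exact lt_irrefl _ hb'x
          · exact absurd (Finset.mem_filter.mp hxin).2 (not_le.mpr hbx)
      · rw [hconv₁ b hb (R.erase r), hconv₁ b hb B]
        exact hFbeq.symm
      · rw [hconv₂ b' hb'B (R.erase r), hconv₂ b' hb'B B]
        have h1 := hRpart b' hb'B
        have h2 : k * ((B.filter (fun x => sgn3 r b' x ≤ 0)).card)
            + k * ((B.filter (fun x => 0 ≤ sgn3 r b' x)).card) = k * B.card + k := by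
          rw [← Nat.left_distrib, Nat.add_comm
            ((B.filter (fun x => sgn3 r b' x ≤ 0)).card)
            ((B.filter (fun x => 0 ≤ sgn3 r b' x)).card), hBpart b' hb'B,
            Nat.left_distrib, Nat.mul_one]
        linarith
  · -- Case A
    push_neg at hS
    obtain ⟨b, hb, hmin⟩ := Finset.exists_min_image B
      (fun c => (B.filter (fun x => 0 ≤ sgn3 r c x)).card)
      (Finset.card_pos.mp (by omega))
    have hbin : b ∈ B.filter (fun x => 0 ≤ sgn3 r b x) :=
      Finset.mem_filter.mpr ⟨hb, by rw [sgn3_self2]⟩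
    have hBA1 : (B.filter (fun x => 0 ≤ sgn3 r b x)).card = 1 := by
      have hsub : B.filter (fun x => 0 ≤ sgn3 r b x) ⊆ {b} := by
        intro x hx
        obtain ⟨hxB, hxs⟩ := Finset.mem_filter.mp hx
        rw [Finset.mem_singleton]
        by_contra hxb
        exact absurd (hmin x hxB) (not_le.mpr (hlt b hb x hxB hxb hxs))
      have h1 := Finset.card_le_card hsub
      have h2 := Finset.card_pos.mpr ⟨b, hbin⟩
      rw [Finset.card_singleton] at h1
      omega
    have hρ1 : 1 ≤ ((R.erase r).filter (fun x => 0 ≤ sgn3 r b x)).card := by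
      apply Finset.card_pos.mpr
      refine ⟨r₁, Finset.mem_filter.mpr ⟨Finset.mem_erase.mpr ⟨hner₁, hr₁⟩, ?_⟩⟩
      rw [hsr₁ b]
      exact (hmuB b hb).le
    have h1 := hS b hb
    rw [hBA1] at h1
    refine Or.inl (case1 b hb (by rw [hBA1]; exact h1) (by rw [hBA1]; omega))
end
end
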